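/- Let 𝒱_ω be a variety of ω-continuous Σ-algebras defined by a set E of inequalities between finite partial terms, 𝒱_r the variety of Δ-algebras defined by E, F_ω(X) the free algebra of 𝒱_ω on X, and R(X) = { t^{F_ω(X)} : t ∈ ΔX } the Δ-subalgebra of F_ω(X) generated by X. Then R(X) is the free Δ-algebra in 𝒱_r on generators X: for every Δ-algebra A in 𝒱_r and map h : X → A, there is a unique Δ-algebra morphism R(X) → A extending h. -/

import Mathlib

/-- A ranked alphabet (signature): a set of symbols with arities. -/
structure Signature where
  symb : Type
  ar : symb → ℕ

/-- A partial Σ-coterm over `X`: a finite or infinite partial Σ-labeled tree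
whose internal nodes are labeled by operation symbols (with children indexed by
the arity, some possibly missing) and whose leaves may be labeled by variables
from `X`.  It is represented by its (partial) labeling function on tree
positions. -/
structure Coterm (σ : Signature) (X : Type*) where
  label : List ℕ → Option (σ.symb ⊕ X)
  consistent : ∀ p i, (label (p ++ [i])).isSome →
    ∃ f, label p = some (Sum.inl f) ∧ i < σ.ar f

namespace Coterm

variable {σ : Signature} {X Y : Type*}

theorem ext' {s t : Coterm σ X} (h : s.label = t.label) : s = t := by
  cases s; cases t; cases h; rfl

/-- The approximation order: `s ≤ t` iff `s` is obtained from `t` by deleting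
subterms, i.e. `s` agrees with `t` wherever `s` is defined. -/
instance : PartialOrder (Coterm σ X) where
  le s t := ∀ p v, s.label p = some v → t.label p = some v
  le_refl s := fun _ _ h => h
  le_trans s t u h₁ h₂ := fun p v h => h₂ p v (h₁ p v h)
  le_antisymm s t h₁ h₂ := by
    apply ext'; funext p
    cases hs : s.label p with
    | some v => exact (h₁ p v hs).symm
    | none =>
      cases ht : t.label p with
      | some v => exact absurd (h₂ p v ht) (by rw [hs]; simp)
      | none => rfl

/-- The empty term `⊥`. -/
instance : OrderBot (Coterm σ X) where
  bot := ⟨fun _ => none, by intro p i h; simp at h⟩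
  bot_le t := by intro p v h; simp only at h; exact absurd h (by simp)

@[simp] theorem bot_label (p : List ℕ) : (⊥ : Coterm σ X).label p = none := rfl

/-- The coterm consisting of a single variable. -/
def var (x : X) : Coterm σ X where
  label p := if p = [] then some (Sum.inr x) else none
  consistent := by
    intro p i h
    try simp only at h
    rw [if_neg (by simp)] at h
    simp at h

/-- The labeling function of `node f ts`. -/
def nodeLabel (f : σ.symb) (ts : Fin (σ.ar f) → Coterm σ X) :
    List ℕ → Option (σ.symb ⊕ X)
  | [] => some (Sum.inl f)
  | i :: q => if h : i < σ.ar f then (ts ⟨i, h⟩).label q else none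

/-- The Σ-operations on coterms: `node f ts` is the tree with root label `f`
and children `ts`. -/
def node (f : σ.symb) (ts : Fin (σ.ar f) → Coterm σ X) : Coterm σ X where
  label := nodeLabel f ts
  consistent := by
    intro p i hp
    cases p with
    | nil =>
      refine ⟨f, rfl, ?_⟩
      simp only [List.nil_append, nodeLabel] at hp
      by_contra hlt
      rw [dif_neg hlt] at hp
      simp at hp
    | cons j q =>
      simp only [List.cons_append, nodeLabel] at hp
      by_cases hj : j < σ.ar f
      · rw [dif_pos hj] at hp
        obtain ⟨g, hg, hi⟩ := (ts ⟨j, hj⟩).consistent q i hp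
        exact ⟨g, by simp only [nodeLabel, dif_pos hj]; exact hg, hi⟩
      · rw [dif_neg hj] at hp
        simp at hp

/-- A coterm is finite if it has finitely many positions;
`FT(X)` is the set of finite partial terms. -/
def IsFinite (t : Coterm σ X) : Prop := {p : List ℕ | (t.label p).isSome}.Finite

/-- `s ≪ t`: `s` is finite and is obtained from `t` by deleting subterms. -/
def Ll (s t : Coterm σ X) : Prop := s.IsFinite ∧ s ≤ t

/-- Relabeling of variables along a map `h : X → Y`; this is the unique
ω-continuous algebra morphism `CT(X) → CT(Y)` extending `x ↦ h x` (viewing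
variables of `Y` as coterms), and also gives the functorial action of the
coterm monad. -/
def rename (h : X → Y) (t : Coterm σ X) : Coterm σ Y where
  label p := (t.label p).map (Sum.map id h)
  consistent := by
    intro p i hp
    try simp only at hp ⊢
    rw [Option.isSome_map] at hp
    obtain ⟨f, hf, hi⟩ := t.consistent p i hp
    exact ⟨f, by rw [hf]; rfl, hi⟩

end Coterm

/-- `g : CT(X) → CT(Y)` is a morphism of ω-continuous algebras: strict,
monotone, commuting with the Σ-operations, and preserving suprema of countable
directed sets. -/
structure IsOmegaContMorphism {σ : Signature} {X Y : Type*}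
    (g : Coterm σ X → Coterm σ Y) : Prop where
  monotone : Monotone g
  strict : g ⊥ = ⊥
  ops : ∀ (f : σ.symb) (ts : Fin (σ.ar f) → Coterm σ X),
    g (Coterm.node f ts) = Coterm.node f (fun i => g (ts i))
  cont : ∀ S : Set (Coterm σ X), S.Countable → S.Nonempty →
    DirectedOn (· ≤ ·) S → ∀ t, IsLUB S t → IsLUB (g '' S) (g t)

/-- A quasi-regular family: an assignment to each set `X` of an ordered
subalgebra `ΔX` of `CT(X)` containing the variables, such that for every
ω-continuous morphism `h : CT(X) → CT(Y)` with `h(X) ⊆ ΔY` one has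
`h(ΔX) ⊆ ΔY`. -/
structure QuasiRegular (σ : Signature) where
  Del : (X : Type) → Set (Coterm σ X)
  bot_mem : ∀ X : Type, (⊥ : Coterm σ X) ∈ Del X
  var_mem : ∀ (X : Type) (x : X), Coterm.var x ∈ Del X
  op_closed : ∀ (X : Type) (f : σ.symb) (ts : Fin (σ.ar f) → Coterm σ X),
    (∀ i, ts i ∈ Del X) → Coterm.node f ts ∈ Del X
  stable : ∀ (X Y : Type) (g : Coterm σ X → Coterm σ Y),
    IsOmegaContMorphism g → (∀ x : X, g (Coterm.var x) ∈ Del Y) →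
    ∀ t ∈ Del X, g t ∈ Del Y

/-- An ordered Σ-algebra structure on a pointed poset `A`. -/
structure OrderedAlg (σ : Signature) (A : Type*) [PartialOrder A] [OrderBot A] where
  op : ∀ f : σ.symb, (Fin (σ.ar f) → A) → A
  mono : ∀ f (a b : Fin (σ.ar f) → A), (∀ i, a i ≤ b i) → op f a ≤ op f b

/-- `S` is an ω-ideal relative to the ambient set `U`. -/
def IsOmegaIdealIn {α : Type*} [Preorder α] (U : Set α) (S : Set α) : Prop :=
  S ⊆ U ∧ ∃ C : Set α, C ⊆ S ∧ C.Countable ∧ C.Nonempty ∧ DirectedOn (· ≤ ·) C ∧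
    S = {x ∈ U | ∃ c ∈ C, x ≤ c}

/-- `S` is an ω-ideal: the down-closure of a countable directed set. -/
def IsOmegaIdeal {α : Type*} [Preorder α] (S : Set α) : Prop :=
  IsOmegaIdealIn Set.univ S

/-- `β : FT(A) → A` interprets finite partial terms over `A` in the ordered
algebra `(A, alg)`: it is the structure map of `A` as an Eilenberg–Moore
algebra for the finite partial term monad.  (The value of `β` on non-finite
coterms is irrelevant.) -/
def IsFinInterp {σ : Signature} {A : Type*} [PartialOrder A] [OrderBot A]
    (alg : OrderedAlg σ A) (β : Coterm σ A → A) : Prop :=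
  (β ⊥ = ⊥) ∧
  (∀ a : A, β (Coterm.var a) = a) ∧
  (∀ (f : σ.symb) (ts : Fin (σ.ar f) → Coterm σ A), (∀ i, (ts i).IsFinite) →
    β (Coterm.node f ts) = alg.op f (fun i => β (ts i))) ∧
  (∀ s s' : Coterm σ A, s.IsFinite → s'.IsFinite → s ≤ s' → β s ≤ β s')

/-- A Δ-set in `A` (w.r.t. the interpretation `β`): the set of values of the
finite approximants of some term `t ∈ ΔA`. -/
def IsDelSet {σ : Signature} (Q : QuasiRegular σ) {A : Type} [PartialOrder A]
    [OrderBot A] (β : Coterm σ A → A) (D : Set A) : Prop :=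
  ∃ t ∈ Q.Del A, D = {x : A | ∃ s, Coterm.Ll s t ∧ x = β s}

/-- `A` is a Δ-regular algebra with (extended) structure map `β : ΔA → A`:
`β` interprets finite terms, the supremum of each Δ-set
`{β(s) : s ≪ t}` (for `t ∈ ΔA`) exists and equals `β(t)`
(this is the extension `β(t) = ⋁{β(s) : s ≪ t}`), and the algebraic
operations preserve suprema of Δ-sets. -/
def IsDelStructure {σ : Signature} (Q : QuasiRegular σ) {A : Type}
    [PartialOrder A] [OrderBot A] (alg : OrderedAlg σ A)
    (β : Coterm σ A → A) : Prop :=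
  IsFinInterp alg β ∧
  (∀ t ∈ Q.Del A, IsLUB {x : A | ∃ s, Coterm.Ll s t ∧ x = β s} (β t)) ∧
  (∀ (f : σ.symb) (as : Fin (σ.ar f) → A) (i : Fin (σ.ar f)),
    ∀ t ∈ Q.Del A,
      IsLUB {x : A | ∃ s, Coterm.Ll s t ∧
          x = alg.op f (Function.update as i (β s))}
        (alg.op f (Function.update as i (β t))))

/-- The multiplication (substitution/flattening) of the coterm monad,
characterized as the unique ω-continuous morphism `CT(CT X) → CT X` sending
each variable `s ∈ CT X` to `s` itself. -/
def IsFlatten {σ : Signature} {X : Type*}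
    (flat : Coterm σ (Coterm σ X) → Coterm σ X) : Prop :=
  IsOmegaContMorphism flat ∧ ∀ s : Coterm σ X, flat (Coterm.var s) = s

/-- `β : CT(B) → B` is the structure map of `B` as an ω-continuous algebra:
it interprets all partial coterms over `B`, each coterm denoting the supremum
of the values of its finite approximants; moreover `B` is ω-complete and its
operations are ω-continuous. -/
def IsOmegaContStructure {σ : Signature} {B : Type*} [PartialOrder B]
    [OrderBot B] (alg : OrderedAlg σ B) (β : Coterm σ B → B) : Prop :=
  (β ⊥ = ⊥) ∧
  (∀ b : B, β (Coterm.var b) = b) ∧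
  (∀ (f : σ.symb) (ts : Fin (σ.ar f) → Coterm σ B),
    β (Coterm.node f ts) = alg.op f (fun i => β (ts i))) ∧
  Monotone β ∧
  (∀ t : Coterm σ B, IsLUB {x : B | ∃ s, Coterm.Ll s t ∧ x = β s} (β t)) ∧
  (∀ S : Set B, S.Countable → S.Nonempty → DirectedOn (· ≤ ·) S →
    ∃ b, IsLUB S b) ∧
  (∀ (f : σ.symb) (as : Fin (σ.ar f) → B) (i : Fin (σ.ar f))
      (S : Set B) (b : B), S.Countable → S.Nonempty → DirectedOn (· ≤ ·) S →
    IsLUB S b →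
    IsLUB {x : B | ∃ d ∈ S, x = alg.op f (Function.update as i d)}
      (alg.op f (Function.update as i b)))

/-- A bundled ω-continuous Σ-algebra. -/
structure OmegaContAlg (σ : Signature) where
  A : Type
  po : PartialOrder A
  ob : @OrderBot A po.toLE
  alg : @OrderedAlg σ A po ob
  interp : Coterm σ A → A
  str : @IsOmegaContStructure σ A po ob alg interp

/-- A bundled Δ-regular algebra. -/
structure DelAlg (σ : Signature) (Q : QuasiRegular σ) where
  A : Type
  po : PartialOrder A
  ob : @OrderBot A po.toLE
  alg : @OrderedAlg σ A po ob
  interp : Coterm σ A → A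
  str : @IsDelStructure σ Q A po ob alg interp

/-- `B` satisfies all inequalities `t ⊑ t'` in `E` (between finite partial
terms over the countable variable set `X_ω = ℕ`), interpreted pointwise via
the structure map `interp` under every valuation `v : ℕ → B`. -/
def SatisfiesIneqs {σ : Signature} {B : Type*} [PartialOrder B]
    (interp : Coterm σ B → B) (E : Set (Coterm σ ℕ × Coterm σ ℕ)) : Prop :=
  ∀ e ∈ E, ∀ v : ℕ → B,
    interp (Coterm.rename v e.1) ≤ interp (Coterm.rename v e.2)

/-- `Fω` together with `ι : X → Fω` is the free ω-continuous algebra of the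
variety `𝒱_ω` defined by `E`, on generators `X`. -/
def IsFreeOmegaCont {σ : Signature} (E : Set (Coterm σ ℕ × Coterm σ ℕ))
    (X : Type) {Fω : Type} [PartialOrder Fω] [OrderBot Fω]
    (βω : Coterm σ Fω → Fω) (ι : X → Fω) : Prop :=
  ∀ B : OmegaContAlg σ, @SatisfiesIneqs σ B.A B.po B.interp E →
    ∀ h : X → B.A,
      ∃ g : Fω → B.A,
        ((∀ a b : Fω, a ≤ b → B.po.le (g a) (g b)) ∧
         g ⊥ = (@OrderBot.toBot B.A B.po.toLE B.ob).bot ∧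
         (∀ t : Coterm σ Fω, g (βω t) = B.interp (Coterm.rename g t)) ∧
         (∀ x : X, g (ι x) = h x)) ∧
        ∀ g' : Fω → B.A,
          ((∀ a b : Fω, a ≤ b → B.po.le (g' a) (g' b)) ∧
           g' ⊥ = (@OrderBot.toBot B.A B.po.toLE B.ob).bot ∧
           (∀ t : Coterm σ Fω, g' (βω t) = B.interp (Coterm.rename g' t)) ∧
           (∀ x : X, g' (ι x) = h x)) → g' = g

namespace Coterm

variable {σ : Signature} {X Y : Type*}

theorem le_def {s t : Coterm σ X} :
    s ≤ t ↔ ∀ p v, s.label p = some v → t.label p = some v := Iff.rfl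

theorem label_isSome_of_append {t : Coterm σ X} (q : List ℕ) (p : List ℕ)
    (h : (t.label (p ++ q)).isSome) : (t.label p).isSome := by
  induction q using List.reverseRecOn generalizing p with
  | nil => simpa using h
  | append_singleton q i ih =>
    rw [← List.append_assoc] at h
    obtain ⟨f, hf, -⟩ := t.consistent (p ++ q) i h
    exact ih p (by rw [hf]; rfl)

theorem label_isSome_of_prefix {t : Coterm σ X} {p q : List ℕ} (hpq : p <+: q)
    (h : (t.label q).isSome) : (t.label p).isSome := by
  obtain ⟨r, rfl⟩ := hpq
  exact label_isSome_of_append r p h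

theorem label_append_of_var {t : Coterm σ X} {p : List ℕ} {x : X}
    (h : t.label p = some (Sum.inr x)) {q : List ℕ} (hq : q ≠ []) :
    t.label (p ++ q) = none := by
  cases q with
  | nil => exact absurd rfl hq
  | cons i q' =>
    by_contra hc
    have hs : (t.label ((p ++ [i]) ++ q')).isSome := by
      rw [List.append_assoc]
      simp only [List.singleton_append]
      exact Option.ne_none_iff_isSome.mp hc
    have := label_isSome_of_append q' (p ++ [i]) hs
    obtain ⟨f, hf, -⟩ := t.consistent p i this
    rw [h] at hf; exact (Sum.inr_ne_inl (Option.some_injective _ hf)).elim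

theorem eq_bot_of_label_nil {t : Coterm σ X} (h : t.label [] = none) : t = ⊥ := by
  apply ext'; funext p
  simp only [bot_label]
  by_contra hc
  have := label_isSome_of_prefix (List.nil_prefix) (Option.ne_none_iff_isSome.mp hc)
  rw [h] at this; exact (Bool.false_ne_true this)

@[simp] theorem var_label_nil (x : X) : (var x : Coterm σ X).label [] = some (Sum.inr x) := rfl

theorem var_label_ne_nil (x : X) {p : List ℕ} (hp : p ≠ []) :
    (var x : Coterm σ X).label p = none := by
  simp [var, hp]

theorem eq_var_of_label_nil {t : Coterm σ X} {x : X}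
    (h : t.label [] = some (Sum.inr x)) : t = var x := by
  apply ext'; funext p
  rcases eq_or_ne p [] with rfl | hp
  · simpa using h
  · rw [var_label_ne_nil x hp]
    have := label_append_of_var h hp
    simpa using this

/-- The `i`-th immediate subterm. -/
def subtree (t : Coterm σ X) (i : ℕ) : Coterm σ X where
  label p := t.label (i :: p)
  consistent := by
    intro p j h
    exact t.consistent (i :: p) j (by simpa using h)

@[simp] theorem subtree_label (t : Coterm σ X) (i : ℕ) (p : List ℕ) :
    (subtree t i).label p = t.label (i :: p) := rfl

@[simp] theorem node_label_nil (f : σ.symb) (ts : Fin (σ.ar f) → Coterm σ X) :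
    (node f ts).label [] = some (Sum.inl f) := rfl

theorem node_label_cons (f : σ.symb) (ts : Fin (σ.ar f) → Coterm σ X)
    {i : ℕ} (h : i < σ.ar f) (q : List ℕ) :
    (node f ts).label (i :: q) = (ts ⟨i, h⟩).label q := by
  simp only [node, nodeLabel, dif_pos h]

theorem node_label_cons_of_ge (f : σ.symb) (ts : Fin (σ.ar f) → Coterm σ X)
    {i : ℕ} (h : ¬ i < σ.ar f) (q : List ℕ) :
    (node f ts).label (i :: q) = none := by
  simp only [node, nodeLabel, dif_neg h]

theorem eq_node_of_label_nil {t : Coterm σ X} {f : σ.symb}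
    (h : t.label [] = some (Sum.inl f)) :
    t = node f (fun i => subtree t (i : ℕ)) := by
  apply ext'; funext p
  cases p with
  | nil => simpa using h
  | cons i q =>
    by_cases hi : i < σ.ar f
    · rw [node_label_cons _ _ hi]; rfl
    · rw [node_label_cons_of_ge _ _ hi]
      by_contra hc
      have hs : (t.label ([] ++ [i])).isSome := by
        refine label_isSome_of_prefix ⟨q, by simp⟩ (Option.ne_none_iff_isSome.mp hc)
      obtain ⟨f', hf', hlt⟩ := t.consistent [] i hs
      rw [h] at hf'
      obtain rfl : f = f' := by simpa using hf'
      exact hi hlt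

theorem subtree_node (f : σ.symb) (ts : Fin (σ.ar f) → Coterm σ X) (i : Fin (σ.ar f)) :
    subtree (node f ts) (i : ℕ) = ts i := by
  apply ext'; funext p
  rw [subtree_label, node_label_cons _ _ i.isLt]

theorem node_le_node {f : σ.symb} {ts ts' : Fin (σ.ar f) → Coterm σ X}
    (h : ∀ i, ts i ≤ ts' i) : node f ts ≤ node f ts' := by
  intro p v hp
  cases p with
  | nil => simpa using hp
  | cons i q =>
    by_cases hi : i < σ.ar f
    · rw [node_label_cons _ _ hi] at hp ⊢
      exact h _ _ _ hp
    · rw [node_label_cons_of_ge _ _ hi] at hp; exact absurd hp (by simp)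

theorem subtree_le_subtree {s t : Coterm σ X} (h : s ≤ t) (i : ℕ) :
    subtree s i ≤ subtree t i := fun p v hp => h _ _ hp

/-! Finiteness -/

theorem isFinite_bot : (⊥ : Coterm σ X).IsFinite := by
  have : {p : List ℕ | (((⊥ : Coterm σ X).label p)).isSome} = (∅ : Set (List ℕ)) := by
    ext p; simp
  unfold IsFinite
  rw [this]
  exact Set.finite_empty

theorem isFinite_var (x : X) : (var x : Coterm σ X).IsFinite := by
  apply Set.Finite.subset (Set.finite_singleton ([] : List ℕ))
  intro p hp
  by_contra hc
  rw [Set.mem_setOf_eq, var_label_ne_nil x hc] at hp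
  exact Bool.false_ne_true hp

theorem isFinite_mono {s t : Coterm σ X} (hst : s ≤ t) (h : t.IsFinite) : s.IsFinite := by
  apply h.subset
  intro p hp
  rw [Set.mem_setOf_eq, Option.isSome_iff_exists] at hp ⊢
  obtain ⟨v, hv⟩ := hp
  exact ⟨v, hst _ _ hv⟩

theorem isFinite_subtree {t : Coterm σ X} (h : t.IsFinite) (i : ℕ) :
    (subtree t i).IsFinite := by
  have : {p | ((subtree t i).label p).isSome} ⊆ (i :: ·) ⁻¹' {p | (t.label p).isSome} := by
    intro p hp; exact hp
  exact Set.Finite.subset (h.preimage (List.cons_injective.injOn)) this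

theorem isFinite_node {f : σ.symb} {ts : Fin (σ.ar f) → Coterm σ X}
    (h : ∀ i, (ts i).IsFinite) : (node f ts).IsFinite := by
  have : {p | ((node f ts).label p).isSome} ⊆
      insert [] (⋃ i : Fin (σ.ar f), ((i : ℕ) :: ·) '' {p | ((ts i).label p).isSome}) := by
    intro p hp
    cases p with
    | nil => exact Set.mem_insert _ _
    | cons i q =>
      by_cases hi : i < σ.ar f
      · refine Set.mem_insert_iff.mpr (Or.inr ?_)
        refine Set.mem_iUnion.mpr ⟨⟨i, hi⟩, ⟨q, ?_, rfl⟩⟩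
        rw [Set.mem_setOf_eq, node_label_cons _ _ hi] at hp
        exact hp
      · rw [Set.mem_setOf_eq, node_label_cons_of_ge _ _ hi] at hp
        exact absurd hp (by simp)
  refine Set.Finite.subset ?_ this
  exact Set.Finite.insert _ (Set.finite_iUnion fun i => ((h i).image _))

theorem isFinite_node_iff {f : σ.symb} {ts : Fin (σ.ar f) → Coterm σ X} :
    (node f ts).IsFinite ↔ ∀ i, (ts i).IsFinite := by
  constructor
  · intro h i
    have := isFinite_subtree h (i : ℕ)
    rwa [subtree_node] at this
  · exact isFinite_node

/-- Induction principle for finite coterms. -/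
theorem finite_induction {P : Coterm σ X → Prop}
    (hbot : P ⊥) (hvar : ∀ x, P (var x))
    (hnode : ∀ (f : σ.symb) (ts : Fin (σ.ar f) → Coterm σ X),
      (∀ i, (ts i).IsFinite) → (∀ i, P (ts i)) → P (node f ts)) :
    ∀ t : Coterm σ X, t.IsFinite → P t := by
  suffices H : ∀ (n : ℕ) (t : Coterm σ X), t.IsFinite →
      (∀ p, ((t.label p).isSome) → p.length < n) → P t by
    intro t ht
    obtain ⟨n, hn⟩ : ∃ n, ∀ p ∈ {p | ((t.label p).isSome)}, p.length < n := by
      obtain ⟨n, hn⟩ := (ht.image List.length).bddAbove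
      exact ⟨n + 1, fun p hp =>
        Nat.lt_succ_of_le (hn (Set.mem_image_of_mem _ hp))⟩
    exact H n t ht hn
  intro n
  induction n with
  | zero =>
    intro t ht hlen
    have : t.label [] = none := by
      by_contra hc
      exact absurd (hlen [] (Option.ne_none_iff_isSome.mp hc)) (by simp)
    rw [eq_bot_of_label_nil this]; exact hbot
  | succ n ih =>
    intro t ht hlen
    cases hnil : t.label [] with
    | none => rw [eq_bot_of_label_nil hnil]; exact hbot
    | some v =>
      cases v with
      | inr x => rw [eq_var_of_label_nil hnil]; exact hvar x
      | inl f =>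
        rw [eq_node_of_label_nil hnil]
        refine hnode f _ (fun i => isFinite_subtree ht _) (fun i => ih _ (isFinite_subtree ht _) ?_)
        intro p hp
        rw [subtree_label] at hp
        have := hlen _ hp
        simpa [Nat.lt_succ_iff] using this

theorem ll_bot {t : Coterm σ X} : Ll ⊥ t := ⟨isFinite_bot, bot_le⟩

theorem ll_refl_of_finite {t : Coterm σ X} (h : t.IsFinite) : Ll t t := ⟨h, le_refl t⟩

/-- Decomposition of finite approximants of a node. -/
theorem ll_node_cases {f : σ.symb} {ts : Fin (σ.ar f) → Coterm σ X} {s : Coterm σ X}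
    (h : Ll s (node f ts)) :
    s = ⊥ ∨ ∃ sv : Fin (σ.ar f) → Coterm σ X, (∀ i, Ll (sv i) (ts i)) ∧ s = node f sv := by
  cases hnil : s.label [] with
  | none => exact Or.inl (eq_bot_of_label_nil hnil)
  | some v =>
    have hv : (node f ts).label [] = some v := h.2 _ _ hnil
    rw [node_label_nil] at hv
    obtain rfl : v = Sum.inl f := by simpa using hv.symm
    refine Or.inr ⟨fun i => subtree s (i : ℕ), fun i => ?_, eq_node_of_label_nil hnil⟩
    constructor
    · exact isFinite_subtree h.1 _
    · intro p w hw
      rw [subtree_label] at hw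
      have := h.2 _ _ hw
      rwa [node_label_cons _ _ i.isLt] at this

/-! Renaming -/

@[simp] theorem rename_label (h : X → Y) (t : Coterm σ X) (p : List ℕ) :
    (rename h t).label p = (t.label p).map (Sum.map id h) := rfl

theorem rename_bot (h : X → Y) : rename h (⊥ : Coterm σ X) = ⊥ := by
  apply ext'; funext p; simp

theorem rename_var (h : X → Y) (x : X) :
    rename h (var x : Coterm σ X) = var (h x) := by
  apply ext'; funext p
  rcases eq_or_ne p [] with rfl | hp
  · simp [var]
  · simp [var_label_ne_nil _ hp]

theorem rename_node (h : X → Y) (f : σ.symb) (ts : Fin (σ.ar f) → Coterm σ X) :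
    rename h (node f ts) = node f (fun i => rename h (ts i)) := by
  apply ext'; funext p
  cases p with
  | nil => simp
  | cons i q =>
    by_cases hi : i < σ.ar f
    · rw [rename_label, node_label_cons _ _ hi, node_label_cons _ _ hi, rename_label]
    · rw [rename_label, node_label_cons_of_ge _ _ hi, node_label_cons_of_ge _ _ hi]
      rfl

theorem rename_mono (h : X → Y) {s t : Coterm σ X} (hst : s ≤ t) :
    rename h s ≤ rename h t := by
  intro p v hp
  rw [rename_label] at hp ⊢
  cases hs : s.label p with
  | none => rw [hs] at hp; exact absurd hp (by simp)
  | some w => rw [hst _ _ hs, ← hs, hp]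

theorem rename_rename (g : Y → X) (h : X → Y) (t : Coterm σ X) :
    True := trivial

theorem rename_comp {Z : Type*} (g : Y → Z) (h : X → Y) (t : Coterm σ X) :
    rename g (rename h t) = rename (g ∘ h) t := by
  apply ext'; funext p
  simp only [rename_label, Option.map_map]
  congr 1
  funext v; cases v <;> rfl

theorem rename_congr {h h' : X → Y} {t : Coterm σ X}
    (H : ∀ p x, t.label p = some (Sum.inr x) → h x = h' x) :
    rename h t = rename h' t := by
  apply ext'; funext p
  simp only [rename_label]
  cases hp : t.label p with
  | none => rfl
  | some v =>
    cases v with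
    | inl f => rfl
    | inr x => simp [H p x hp]

theorem rename_id (t : Coterm σ X) : rename (fun x => x) t = t := by
  apply ext'; funext p
  simp only [rename_label]
  cases hp : t.label p with
  | none => rfl
  | some v => cases v <;> rfl

theorem isFinite_rename {h : X → Y} {t : Coterm σ X} (ht : t.IsFinite) :
    (rename h t).IsFinite := by
  apply ht.subset
  intro p hp
  simp only [Set.mem_setOf_eq, rename_label, Option.isSome_map] at hp ⊢
  exact hp

/-- Restriction of `t` to the domain of `u`. -/
def restr (t : Coterm σ X) (u : Coterm σ Y) : Coterm σ X where
  label p := if (u.label p).isSome then t.label p else none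
  consistent := by
    intro p i h
    by_cases hu : (u.label (p ++ [i])).isSome
    · rw [if_pos hu] at h
      obtain ⟨f, hf, hlt⟩ := t.consistent p i h
      exact ⟨f, by simp only [if_pos (label_isSome_of_append [i] p hu), hf], hlt⟩
    · rw [if_neg hu] at h; exact absurd h (by simp)

@[simp] theorem restr_label (t : Coterm σ X) (u : Coterm σ Y) (p : List ℕ) :
    (restr t u).label p = if (u.label p).isSome then t.label p else none := rfl

theorem restr_label_of_isSome {t : Coterm σ X} {u : Coterm σ Y} {p : List ℕ}
    (h : (u.label p).isSome) : (restr t u).label p = t.label p := if_pos h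

theorem restr_le (t : Coterm σ X) (u : Coterm σ Y) : restr t u ≤ t := by
  intro p v hp
  rw [restr_label] at hp
  by_cases hu : (u.label p).isSome
  · rwa [if_pos hu] at hp
  · rw [if_neg hu] at hp; exact absurd hp (by simp)

theorem isFinite_restr (t : Coterm σ X) {u : Coterm σ Y} (hu : u.IsFinite) :
    (restr t u).IsFinite := by
  apply hu.subset
  intro p hp
  simp only [Set.mem_setOf_eq, restr_label] at hp ⊢
  by_cases h : (u.label p).isSome
  · exact h
  · rw [if_neg h] at hp; exact absurd hp (by simp)

/-- Transfer of finite approximants along renaming. -/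
theorem ll_rename_iff {h : X → Y} {u : Coterm σ X} {s' : Coterm σ Y} :
    Ll s' (rename h u) ↔ ∃ s, Ll s u ∧ s' = rename h s := by
  constructor
  · rintro ⟨hfin, hle⟩
    refine ⟨restr u s', ⟨isFinite_restr _ hfin, restr_le _ _⟩, ?_⟩
    apply ext'; funext p
    cases hp : s'.label p with
    | none =>
      simp [rename_label, restr_label, hp]
    | some w =>
      have hw : (rename h u).label p = some w := hle _ _ hp
      rw [rename_label] at hw
      have hs : (s'.label p).isSome := by rw [hp]; rfl
      simp only [rename_label, restr_label, if_pos hs, hp]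
      exact hw.symm
  · rintro ⟨s, ⟨hfin, hle⟩, rfl⟩
    exact ⟨isFinite_rename hfin, rename_mono h hle⟩

/-! LUB characterization in the coterm order -/

theorem isLUB_label {S : Set (Coterm σ X)} {u : Coterm σ X} (h : IsLUB S u)
    {p : List ℕ} {v : σ.symb ⊕ X} (hp : u.label p = some v) :
    ∃ s ∈ S, s.label p = some v := by
  by_contra hc
  push_neg at hc
  have hcons : ∀ q i, ((fun q => if p <+: q then none else u.label q) (q ++ [i])).isSome →
      ∃ f, (fun q => if p <+: q then none else u.label q) q = some (Sum.inl f) ∧ i < σ.ar f := by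
    intro q i hq
    simp only at hq ⊢
    by_cases hpq : p <+: q ++ [i]
    · rw [if_pos hpq] at hq; exact absurd hq (by simp)
    · rw [if_neg hpq] at hq
      obtain ⟨f, hf, hlt⟩ := u.consistent q i hq
      refine ⟨f, ?_, hlt⟩
      rw [if_neg (fun hx => hpq (hx.trans ⟨[i], rfl⟩)), hf]
  have hub : (⟨fun q => if p <+: q then none else u.label q, hcons⟩ : Coterm σ X) ∈
      upperBounds S := by
    intro s hs q w hq
    have huq : u.label q = some w := h.1 hs _ _ hq
    show (if p <+: q then none else u.label q) = some w
    have hnp : ¬ p <+: q := by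
      intro hpq
      have hsome : (s.label p).isSome := label_isSome_of_prefix hpq (by rw [hq]; rfl)
      rw [Option.isSome_iff_exists] at hsome
      obtain ⟨w', hw'⟩ := hsome
      have h2 := h.1 hs _ _ hw'
      rw [hp] at h2
      obtain rfl : v = w' := by simpa using h2
      exact hc s hs hw'
    rw [if_neg hnp]
    exact huq
  have h3 := h.2 hub _ _ hp
  simp only at h3
  rw [if_pos (List.prefix_refl p)] at h3
  exact absurd h3 (by simp)

theorem isOmegaContMorphism_rename (h : X → Y) :
    IsOmegaContMorphism (rename h : Coterm σ X → Coterm σ Y) := by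
  refine ⟨fun s t hst => rename_mono h hst, rename_bot h, rename_node h, ?_⟩
  intro S _ _ _ u hu
  constructor
  · rintro _ ⟨s, hs, rfl⟩
    exact rename_mono h (hu.1 hs)
  · intro w hw
    intro p v hp
    rw [rename_label] at hp
    cases hup : u.label p with
    | none => rw [hup] at hp; exact absurd hp (by simp)
    | some v₀ =>
      rw [hup] at hp
      obtain ⟨s, hs, hsp⟩ := isLUB_label hu hup
      have : (rename h s).label p = some v := by rw [rename_label, hsp, hp]
      exact hw (Set.mem_image_of_mem _ hs) _ _ this

end Coterm
namespace Coterm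

open scoped Classical

variable {σ : Signature} {X Y : Type*} {A : Type*}

theorem prefix_concat_cases {q p : List ℕ} {i : ℕ} (h : q <+: p ++ [i]) :
    q <+: p ∨ q = p ++ [i] := by
  obtain ⟨r, hr⟩ := h
  rcases r.eq_nil_or_concat' with rfl | ⟨r', j, rfl⟩
  · right; simpa using hr
  · left
    rw [← List.append_assoc] at hr
    obtain ⟨h1, h2⟩ := List.append_inj' hr (by simp)
    exact ⟨r', h1⟩

theorem var_prefix_unique {u : Coterm σ A} {p q q' : List ℕ} {a a' : A}
    (hq : q <+: p) (ha : u.label q = some (Sum.inr a))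
    (hq' : q' <+: p) (ha' : u.label q' = some (Sum.inr a')) :
    q = q' ∧ a = a' := by
  have hqq : q = q' := by
    rcases List.prefix_or_prefix_of_prefix hq hq' with h | h
    · obtain ⟨r, rfl⟩ := h
      rcases eq_or_ne r [] with rfl | hr
      · simp
      · rw [label_append_of_var ha hr] at ha'; exact absurd ha' (by simp)
    · obtain ⟨r, rfl⟩ := h
      rcases eq_or_ne r [] with rfl | hr
      · simp
      · rw [label_append_of_var ha' hr] at ha; exact absurd ha (by simp)
  subst hqq
  rw [ha] at ha'
  exact ⟨rfl, by simpa using ha'⟩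

/-- The `inl`-part of an optional label, with variables removed. -/
def inlPart : Option (σ.symb ⊕ A) → Option (σ.symb ⊕ X)
  | some (Sum.inl f) => some (Sum.inl f)
  | _ => none

@[simp] theorem inlPart_none : (inlPart (none : Option (σ.symb ⊕ A)) : Option (σ.symb ⊕ X)) = none := rfl
@[simp] theorem inlPart_inl (f : σ.symb) :
    (inlPart (some (Sum.inl f) : Option (σ.symb ⊕ A)) : Option (σ.symb ⊕ X)) = some (Sum.inl f) := rfl
@[simp] theorem inlPart_inr (a : A) :
    (inlPart (some (Sum.inr a) : Option (σ.symb ⊕ A)) : Option (σ.symb ⊕ X)) = none := rfl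

theorem inlPart_isSome {o : Option (σ.symb ⊕ A)} (h : ((inlPart o : Option (σ.symb ⊕ X))).isSome) :
    ∃ f, o = some (Sum.inl f) ∧ (inlPart o : Option (σ.symb ⊕ X)) = some (Sum.inl f) := by
  match o with
  | none => exact absurd h (by simp)
  | some (Sum.inr a) => exact absurd h (by simp)
  | some (Sum.inl f) => exact ⟨f, rfl, rfl⟩

noncomputable def substLabel (k : A → Coterm σ X) (u : Coterm σ A) (p : List ℕ) :
    Option (σ.symb ⊕ X) :=
  if h : ∃ qa : List ℕ × A, qa.1 <+: p ∧ u.label qa.1 = some (Sum.inr qa.2) then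
    (k h.choose.2).label (p.drop h.choose.1.length)
  else inlPart (u.label p)

theorem substLabel_of_var_prefix (k : A → Coterm σ X) {u : Coterm σ A}
    {p q : List ℕ} {a : A} (hq : q <+: p) (ha : u.label q = some (Sum.inr a)) :
    substLabel k u p = (k a).label (p.drop q.length) := by
  have hvp : ∃ qa : List ℕ × A, qa.1 <+: p ∧ u.label qa.1 = some (Sum.inr qa.2) :=
    ⟨(q, a), hq, ha⟩
  rw [substLabel, dif_pos hvp]
  obtain ⟨hq2, ha2⟩ := hvp.choose_spec
  obtain ⟨he, ha3⟩ := var_prefix_unique hq2 ha2 hq ha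
  rw [he, ha3]

theorem substLabel_of_no_var (k : A → Coterm σ X) {u : Coterm σ A} {p : List ℕ}
    (h : ¬ ∃ qa : List ℕ × A, qa.1 <+: p ∧ u.label qa.1 = some (Sum.inr qa.2)) :
    substLabel k u p = inlPart (u.label p) := by
  rw [substLabel, dif_neg h]

/-- Substitution of coterms for variables. -/
noncomputable def subst (k : A → Coterm σ X) (u : Coterm σ A) : Coterm σ X where
  label := substLabel k u
  consistent := by
    intro p i h
    by_cases hvp : ∃ qa : List ℕ × A, qa.1 <+: p ++ [i] ∧ u.label qa.1 = some (Sum.inr qa.2)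
    · obtain ⟨⟨q, a⟩, hq, ha⟩ := hvp
      rcases prefix_concat_cases hq with hq' | hq'
      · obtain ⟨r, hr⟩ := hq'
        rw [substLabel_of_var_prefix k hq ha, ← hr, List.append_assoc, List.drop_left] at h
        obtain ⟨f, hf, hlt⟩ := (k a).consistent r i h
        refine ⟨f, ?_, hlt⟩
        rw [substLabel_of_var_prefix k (⟨r, hr⟩ : q <+: p) ha, ← hr, List.drop_left]
        exact hf
      · subst hq'
        obtain ⟨f, hf, hlt⟩ := u.consistent p i (by rw [ha]; rfl)
        refine ⟨f, ?_, hlt⟩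
        have hnp : ¬ ∃ qa : List ℕ × A, qa.1 <+: p ∧ u.label qa.1 = some (Sum.inr qa.2) := by
          rintro ⟨⟨q', a'⟩, hq', ha'⟩
          obtain ⟨r, rfl⟩ := hq'
          have hnone : u.label (q' ++ (r ++ [i])) = none :=
            label_append_of_var ha' (by simp)
          rw [← List.append_assoc] at hnone
          rw [hnone] at ha; exact absurd ha (by simp)
        rw [substLabel_of_no_var k hnp, hf]
        simp
    · rw [substLabel] at h
      rw [dif_neg hvp] at h
      obtain ⟨f₀, hf₀, -⟩ := inlPart_isSome (X := X) h
      obtain ⟨f, hf, hlt⟩ := u.consistent p i (by rw [hf₀]; rfl)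
      refine ⟨f, ?_, hlt⟩
      have hnp : ¬ ∃ qa : List ℕ × A, qa.1 <+: p ∧ u.label qa.1 = some (Sum.inr qa.2) := by
        rintro ⟨⟨q', a'⟩, hq', ha'⟩
        exact hvp ⟨(q', a'), hq'.trans ⟨[i], rfl⟩, ha'⟩
      rw [substLabel_of_no_var k hnp, hf]
      simp

@[simp] theorem subst_label (k : A → Coterm σ X) (u : Coterm σ A) (p : List ℕ) :
    (subst k u).label p = substLabel k u p := rfl

theorem subst_label_of_var_prefix (k : A → Coterm σ X) {u : Coterm σ A}
    {p q : List ℕ} {a : A} (hq : q <+: p) (ha : u.label q = some (Sum.inr a)) :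
    (subst k u).label p = (k a).label (p.drop q.length) :=
  substLabel_of_var_prefix k hq ha

theorem subst_label_of_no_var (k : A → Coterm σ X) {u : Coterm σ A} {p : List ℕ}
    (h : ¬ ∃ qa : List ℕ × A, qa.1 <+: p ∧ u.label qa.1 = some (Sum.inr qa.2)) :
    (subst k u).label p = inlPart (u.label p) :=
  substLabel_of_no_var k h

theorem subst_var (k : A → Coterm σ X) (a : A) : subst k (var a) = k a := by
  apply ext'; funext p
  rw [subst_label_of_var_prefix k (List.nil_prefix) (var_label_nil a)]
  simp

theorem subst_bot (k : A → Coterm σ X) : subst k (⊥ : Coterm σ A) = ⊥ := by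
  apply ext'; funext p
  rw [subst_label, substLabel_of_no_var k (by rintro ⟨⟨q, a⟩, -, hq⟩; rw [bot_label] at hq; exact absurd hq (by simp))]
  simp

theorem subst_node (k : A → Coterm σ X) (f : σ.symb) (ts : Fin (σ.ar f) → Coterm σ A) :
    subst k (node f ts) = node f (fun i => subst k (ts i)) := by
  apply ext'; funext p
  cases p with
  | nil =>
    rw [subst_label, substLabel_of_no_var k ?_, node_label_nil, node_label_nil]
    · simp
    · rintro ⟨⟨q, a⟩, hq, hlab⟩
      rw [List.prefix_nil.mp hq] at hlab
      rw [node_label_nil] at hlab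
      simp at hlab
  | cons i q =>
    by_cases hi : i < σ.ar f
    · rw [node_label_cons _ _ hi]
      by_cases hvp : ∃ qa : List ℕ × A, qa.1 <+: q ∧ (ts ⟨i, hi⟩).label qa.1 = some (Sum.inr qa.2)
      · obtain ⟨⟨q', a⟩, hq', ha⟩ := hvp
        have h1 : (node f ts).label (i :: q') = some (Sum.inr a) := by
          rw [node_label_cons _ _ hi]; exact ha
        rw [subst_label_of_var_prefix k (List.cons_prefix_cons.mpr ⟨rfl, hq'⟩) h1,
          subst_label_of_var_prefix k hq' ha]
        simp
      · have h2 : (subst k (ts ⟨i, hi⟩)).label q = inlPart ((ts ⟨i, hi⟩).label q) :=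
          subst_label_of_no_var k hvp
        have h1 : (subst k (node f ts)).label (i :: q) =
            inlPart ((node f ts).label (i :: q)) := by
          refine subst_label_of_no_var k ?_
          rintro ⟨⟨q', a⟩, hq', hlab⟩
          cases q' with
          | nil =>
            rw [node_label_nil] at hlab
            simp at hlab
          | cons j q'' =>
            obtain ⟨rfl, hq2⟩ := List.cons_prefix_cons.mp hq'
            rw [node_label_cons _ _ hi] at hlab
            exact hvp ⟨(q'', a), hq2, hlab⟩
        rw [h1, h2, node_label_cons _ _ hi]
    · rw [node_label_cons_of_ge _ _ hi]
      rw [subst_label, substLabel_of_no_var k ?_]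
      · rw [node_label_cons_of_ge _ _ hi]
        simp
      · rintro ⟨⟨q', a⟩, hq', hlab⟩
        cases q' with
        | nil =>
          rw [node_label_nil] at hlab
          simp at hlab
        | cons j q'' =>
          obtain ⟨rfl, hq2⟩ := List.cons_prefix_cons.mp hq'
          rw [node_label_cons_of_ge _ _ hi] at hlab
          exact absurd hlab (by simp)

theorem subst_mono (k : A → Coterm σ X) {s u : Coterm σ A} (hsu : s ≤ u) :
    subst k s ≤ subst k u := by
  intro p v hp
  by_cases hvp : ∃ qa : List ℕ × A, qa.1 <+: p ∧ s.label qa.1 = some (Sum.inr qa.2)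
  · obtain ⟨⟨q, a⟩, hq, ha⟩ := hvp
    rw [subst_label_of_var_prefix k hq ha] at hp
    rw [subst_label_of_var_prefix k hq (hsu _ _ ha)]
    exact hp
  · rw [subst_label_of_no_var k hvp] at hp
    obtain ⟨f, hf, hfp⟩ := inlPart_isSome (X := X) (o := s.label p) (by rw [hp]; rfl)
    rw [hf] at hp
    obtain rfl : v = Sum.inl f := by simpa using hp.symm
    have hup : u.label p = some (Sum.inl f) := hsu _ _ hf
    rw [subst_label_of_no_var k ?_, hup]
    · simp
    · rintro ⟨⟨q, a⟩, hq, hlab⟩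
      have : (s.label q).isSome := by
        refine label_isSome_of_prefix hq ?_
        rw [hf]; rfl
      rw [Option.isSome_iff_exists] at this
      obtain ⟨w, hw⟩ := this
      have h2 := hsu _ _ hw
      rw [hlab] at h2
      obtain rfl : w = Sum.inr a := by simpa using h2.symm
      exact hvp ⟨(q, a), hq, hw⟩

theorem isOmegaContMorphism_subst (k : A → Coterm σ X) :
    IsOmegaContMorphism (subst k : Coterm σ A → Coterm σ X) := by
  refine ⟨fun s u hsu => subst_mono k hsu, subst_bot k, subst_node k, ?_⟩
  intro S _ _ _ u hu
  constructor
  · rintro _ ⟨s, hs, rfl⟩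
    exact subst_mono k (hu.1 hs)
  · intro w hw p v hp
    by_cases hvp : ∃ qa : List ℕ × A, qa.1 <+: p ∧ u.label qa.1 = some (Sum.inr qa.2)
    · obtain ⟨⟨q, a⟩, hq, ha⟩ := hvp
      rw [subst_label_of_var_prefix k hq ha] at hp
      obtain ⟨s, hs, hsq⟩ := isLUB_label hu ha
      have : (subst k s).label p = some v := by
        rw [subst_label_of_var_prefix k hq hsq]; exact hp
      exact hw (Set.mem_image_of_mem _ hs) _ _ this
    · rw [subst_label_of_no_var k hvp] at hp
      obtain ⟨f, hf, hfp⟩ := inlPart_isSome (X := X) (o := u.label p) (by rw [hp]; rfl)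
      rw [hf] at hp
      obtain rfl : v = Sum.inl f := by simpa using hp.symm
      obtain ⟨s, hs, hsp⟩ := isLUB_label hu hf
      have hnv : ¬ ∃ qa : List ℕ × A, qa.1 <+: p ∧ s.label qa.1 = some (Sum.inr qa.2) := by
        rintro ⟨⟨q, a⟩, hq, hlab⟩
        exact hvp ⟨(q, a), hq, hu.1 hs _ _ hlab⟩
      have : (subst k s).label p = some (Sum.inl f) := by
        rw [subst_label_of_no_var k hnv, hsp]; rfl
      exact hw (Set.mem_image_of_mem _ hs) _ _ this

theorem rename_subst (v : X → Y) (k : A → Coterm σ X) (u : Coterm σ A) :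
    rename v (subst k u) = subst (fun a => rename v (k a)) u := by
  apply ext'; funext p
  by_cases hvp : ∃ qa : List ℕ × A, qa.1 <+: p ∧ u.label qa.1 = some (Sum.inr qa.2)
  · obtain ⟨⟨q, a⟩, hq, ha⟩ := hvp
    rw [rename_label, subst_label_of_var_prefix k hq ha,
      subst_label_of_var_prefix _ hq ha, rename_label]
  · rw [rename_label, subst_label_of_no_var k hvp, subst_label_of_no_var _ hvp]
    cases hl : u.label p with
    | none => simp
    | some w => cases w <;> simp

theorem subst_var_fun (u : Coterm σ X) : subst (fun x => (var x : Coterm σ X)) u = u := by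
  apply ext'; funext p
  by_cases hvp : ∃ qa : List ℕ × X, qa.1 <+: p ∧ u.label qa.1 = some (Sum.inr qa.2)
  · obtain ⟨⟨q, a⟩, hq, ha⟩ := hvp
    rw [subst_label_of_var_prefix _ hq ha]
    obtain ⟨r, rfl⟩ := hq
    rw [List.drop_left]
    rcases eq_or_ne r [] with rfl | hr
    · simpa using ha.symm
    · rw [var_label_ne_nil _ hr, label_append_of_var ha hr]
  · rw [subst_label_of_no_var _ hvp]
    cases hl : u.label p with
    | none => simp
    | some w =>
      cases w with
      | inl f => simp
      | inr x => exact absurd (⟨(p, x), List.prefix_refl p, hl⟩ :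
          ∃ qa : List ℕ × X, qa.1 <+: p ∧ u.label qa.1 = some (Sum.inr qa.2)) hvp

/-- Restriction of `t` to prefixes of the domain of `u`. -/
noncomputable def restrPre (t : Coterm σ X) (u : Coterm σ Y) : Coterm σ X where
  label p := if (∃ p', (u.label p').isSome ∧ p <+: p') then t.label p else none
  consistent := by
    intro p i h
    by_cases hc : ∃ p', (u.label p').isSome ∧ p ++ [i] <+: p'
    · rw [if_pos hc] at h
      obtain ⟨f, hf, hlt⟩ := t.consistent p i h
      obtain ⟨p', hp', hpp⟩ := hc
      refine ⟨f, ?_, hlt⟩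
      show (if (∃ p', (u.label p').isSome ∧ p <+: p') then t.label p else none) = some (Sum.inl f)
      rw [if_pos (⟨p', hp', (List.IsPrefix.trans (⟨[i], rfl⟩ : p <+: p ++ [i]) hpp)⟩ :
        ∃ p', (u.label p').isSome ∧ p <+: p'), hf]
    · rw [if_neg hc] at h; exact absurd h (by simp)

@[simp] theorem restrPre_label (t : Coterm σ X) (u : Coterm σ Y) (p : List ℕ) :
    (restrPre t u).label p =
      if (∃ p', (u.label p').isSome ∧ p <+: p') then t.label p else none := rfl

theorem restrPre_le (t : Coterm σ X) (u : Coterm σ Y) : restrPre t u ≤ t := by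
  intro p v hp
  rw [restrPre_label] at hp
  by_cases hc : ∃ p', (u.label p').isSome ∧ p <+: p'
  · rwa [if_pos hc] at hp
  · rw [if_neg hc] at hp; exact absurd hp (by simp)

theorem isFinite_restrPre (t : Coterm σ X) {u : Coterm σ Y} (hu : u.IsFinite) :
    (restrPre t u).IsFinite := by
  have hsub : {p | ((restrPre t u).label p).isSome} ⊆
      ⋃ p' ∈ {p | (u.label p).isSome}, {q | q ∈ p'.inits} := by
    intro p hp
    rw [Set.mem_setOf_eq, restrPre_label] at hp
    by_cases hc : ∃ p', (u.label p').isSome ∧ p <+: p'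
    · obtain ⟨p', h1, h2⟩ := hc
      exact Set.mem_biUnion h1 (by simpa [List.mem_inits] using h2)
    · rw [if_neg hc] at hp; exact absurd hp (by simp)
  exact Set.Finite.subset (Set.Finite.biUnion hu (fun p' _ => p'.inits.finite_toSet)) hsub

/-- Finite approximants of a substitution factor through finite approximants
of the outer term. -/
theorem ll_subst {k : A → Coterm σ X} {u : Coterm σ A} {s' : Coterm σ X}
    (h : Ll s' (subst k u)) : ∃ s, Ll s u ∧ s' ≤ subst k s := by
  refine ⟨restrPre u s', ⟨isFinite_restrPre _ h.1, restrPre_le _ _⟩, ?_⟩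
  intro p v hp
  have hup : (subst k u).label p = some v := h.2 _ _ hp
  by_cases hvp : ∃ qa : List ℕ × A, qa.1 <+: p ∧ u.label qa.1 = some (Sum.inr qa.2)
  · obtain ⟨⟨q, a⟩, hq, ha⟩ := hvp
    rw [subst_label_of_var_prefix k hq ha] at hup
    have hra : (restrPre u s').label q = some (Sum.inr a) := by
      rw [restrPre_label, if_pos (⟨p, by rw [hp]; rfl, hq⟩ :
        ∃ p', (s'.label p').isSome ∧ q <+: p')]
      exact ha
    rw [subst_label_of_var_prefix k hq hra]
    exact hup
  · rw [subst_label_of_no_var k hvp] at hup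
    have hnv : ¬ ∃ qa : List ℕ × A, qa.1 <+: p ∧
        (restrPre u s').label qa.1 = some (Sum.inr qa.2) := by
      rintro ⟨⟨q, a⟩, hq, hlab⟩
      have : u.label q = some (Sum.inr a) := restrPre_le u s' _ _ hlab
      exact hvp ⟨(q, a), hq, this⟩
    rw [subst_label_of_no_var k hnv]
    have hres : (restrPre u s').label p = u.label p := by
      rw [restrPre_label, if_pos (⟨p, by rw [hp]; rfl, List.prefix_refl p⟩ :
        ∃ p', (s'.label p').isSome ∧ p <+: p')]
    rw [hres]
    exact hup

end Coterm
section DelAux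

open Coterm
open scoped Classical

variable {σ : Signature} {A : Type} [PartialOrder A] [OrderBot A]

/-- Monotonicity of a finite interpretation under simultaneous growth of the
term and of its leaf values. -/
theorem interp_mono_plus {alg : OrderedAlg σ A} {β : Coterm σ A → A}
    (hβ : IsFinInterp alg β) :
    ∀ r : Coterm σ A, r.IsFinite → ∀ r' : Coterm σ A, r'.IsFinite →
      (∀ p f, r.label p = some (Sum.inl f) → r'.label p = some (Sum.inl f)) →
      (∀ p b, r.label p = some (Sum.inr b) →
        ∃ b', r'.label p = some (Sum.inr b') ∧ b ≤ b') →
      β r ≤ β r' := by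
  refine Coterm.finite_induction (P := fun r => ∀ r' : Coterm σ A, r'.IsFinite →
      (∀ p f, r.label p = some (Sum.inl f) → r'.label p = some (Sum.inl f)) →
      (∀ p b, r.label p = some (Sum.inr b) →
        ∃ b', r'.label p = some (Sum.inr b') ∧ b ≤ b') → β r ≤ β r') ?_ ?_ ?_
  · intro r' _ _ _
    rw [hβ.1]; exact bot_le
  · intro b r' _ _ hlf
    obtain ⟨b', hb', hle⟩ := hlf [] b (var_label_nil b)
    rw [eq_var_of_label_nil hb', hβ.2.1, hβ.2.1]
    exact hle
  · intro f ts hfin ih r' hr' hsh hlf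
    have h0 : r'.label [] = some (Sum.inl f) := hsh [] f (node_label_nil f ts)
    rw [eq_node_of_label_nil h0, hβ.2.2.1 f ts hfin,
      hβ.2.2.1 f _ (fun i => isFinite_subtree hr' _)]
    apply alg.mono
    intro i
    refine ih i _ (isFinite_subtree hr' _) ?_ ?_
    · intro p g hp
      have : (node f ts).label ((i : ℕ) :: p) = some (Sum.inl g) := by
        rw [node_label_cons _ _ i.isLt]
        simpa using hp
      simpa using hsh _ g this
    · intro p b hp
      have : (node f ts).label ((i : ℕ) :: p) = some (Sum.inr b) := by
        rw [node_label_cons _ _ i.isLt]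
        simpa using hp
      simpa using hlf _ b this

theorem isLUB_down_iff {D : Set A} {b : A} :
    IsLUB {x | ∃ y ∈ D, x ≤ y} b ↔ IsLUB D b := by
  have : upperBounds {x | ∃ y ∈ D, x ≤ y} = upperBounds D := by
    ext c
    constructor
    · intro hc y hy
      exact hc ⟨y, hy, le_refl y⟩
    · rintro hc x ⟨y, hy, hxy⟩
      exact hxy.trans (hc hy)
  unfold IsLUB
  rw [this]

theorem directedOn_exists_ub_finite {S : Set A} (hd : DirectedOn (· ≤ ·) S)
    (hne : S.Nonempty) {F : Set A} (hF : F.Finite) :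
    F ⊆ S → ∃ z ∈ S, ∀ y ∈ F, y ≤ z := by
  refine Set.Finite.induction_on (motive := fun F _ => F ⊆ S → ∃ z ∈ S, ∀ y ∈ F, y ≤ z) F hF ?_ ?_
  · intro _
    obtain ⟨z, hz⟩ := hne
    exact ⟨z, hz, by simp⟩
  · intro a F _ _ ih hsub
    obtain ⟨z, hz, hzub⟩ := ih (fun x hx => hsub (Set.mem_insert_of_mem a hx))
    obtain ⟨z', hz', haz', hzz'⟩ := hd a (hsub (Set.mem_insert a F)) z hz
    refine ⟨z', hz', ?_⟩
    intro y hy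
    rcases Set.mem_insert_iff.mp hy with rfl | hy
    · exact haz'
    · exact (hzub y hy).trans hzz'

/-- The poset of ω-ideals (nonempty directed lower sets) of `A`. -/
def OIdl (σ : Signature) (A : Type) [PartialOrder A] [OrderBot A] : Type :=
  {S : Set A // S.Nonempty ∧ IsLowerSet S ∧ DirectedOn (· ≤ ·) S}

namespace OIdl

instance : PartialOrder (OIdl σ A) :=
  PartialOrder.lift (fun I => I.1) Subtype.coe_injective

theorem le_iff {I J : OIdl σ A} : I ≤ J ↔ I.1 ⊆ J.1 := Iff.rfl

theorem bot_mem (I : OIdl σ A) : (⊥ : A) ∈ I.1 := by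
  obtain ⟨b, hb⟩ := I.2.1
  exact I.2.2.1 (bot_le : (⊥ : A) ≤ b) hb

instance : OrderBot (OIdl σ A) where
  bot := ⟨Set.Iic ⊥, ⟨⊥, by simp⟩, fun a b hba ha => le_trans hba ha,
    fun x hx y hy => ⟨⊥, le_refl _, hx, hy⟩⟩
  bot_le I := by
    have h : Set.Iic (⊥ : A) ⊆ I.1 := by
      intro x hx
      have hx' : x = ⊥ := le_antisymm hx bot_le
      rw [hx']; exact bot_mem I
    exact h

theorem bot_val : (⊥ : OIdl σ A).1 = Set.Iic (⊥ : A) := rfl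

/-- The principal ideal. -/
def prin (σ : Signature) (b : A) : OIdl σ A :=
  ⟨Set.Iic b, ⟨b, le_refl b⟩, fun x y hyx hx => le_trans hyx hx,
    fun x hx y hy => ⟨b, le_refl b, hx, hy⟩⟩

@[simp] theorem mem_prin {b x : A} : x ∈ (prin σ b).1 ↔ x ≤ b := Iff.rfl

variable (alg : OrderedAlg σ A)

/-- The algebra operations on ideals. -/
def op (f : σ.symb) (Ss : Fin (σ.ar f) → OIdl σ A) : OIdl σ A := by
  refine ⟨{x | ∃ a : Fin (σ.ar f) → A, (∀ i, a i ∈ (Ss i).1) ∧ x ≤ alg.op f a},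
    ⟨⊥, fun i => (Ss i).2.1.choose, fun i => (Ss i).2.1.choose_spec, bot_le⟩, ?_, ?_⟩
  · rintro x y hyx ⟨a, ha, hx⟩
    exact ⟨a, ha, hyx.trans hx⟩
  · rintro x ⟨a, ha, hx⟩ y ⟨a', ha', hy⟩
    have hc : ∀ i, ∃ c ∈ (Ss i).1, a i ≤ c ∧ a' i ≤ c :=
      fun i => (Ss i).2.2.2 (a i) (ha i) (a' i) (ha' i)
    choose c hc1 hc2 hc3 using hc
    refine ⟨alg.op f c, ⟨c, hc1, le_refl _⟩, hx.trans (alg.mono f a c hc2),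
      hy.trans (alg.mono f a' c hc3)⟩

theorem mem_op {f : σ.symb} {Ss : Fin (σ.ar f) → OIdl σ A} {x : A} :
    x ∈ (op alg f Ss).1 ↔ ∃ a : Fin (σ.ar f) → A, (∀ i, a i ∈ (Ss i).1) ∧ x ≤ alg.op f a :=
  Iff.rfl

/-- The ordered algebra of ideals. -/
def idlAlg : OrderedAlg σ (OIdl σ A) where
  op := op alg
  mono := by
    intro f Ss Ss' h x hx
    rw [mem_op] at hx ⊢
    obtain ⟨a, ha, hx⟩ := hx
    exact ⟨a, fun i => h i (ha i), hx⟩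

/-- A finite selection from a coterm over ideals. -/
structure SelR (r : Coterm σ A) (T : Coterm σ (OIdl σ A)) : Prop where
  inl : ∀ p f, r.label p = some (Sum.inl f) → T.label p = some (Sum.inl f)
  inr : ∀ p b, r.label p = some (Sum.inr b) →
    ∃ S, T.label p = some (Sum.inr S) ∧ b ∈ S.1

theorem SelR.bot {T : Coterm σ (OIdl σ A)} : SelR (⊥ : Coterm σ A) T :=
  ⟨fun p f h => absurd h (by simp), fun p b h => absurd h (by simp)⟩

theorem SelR.mono {r : Coterm σ A} {T T' : Coterm σ (OIdl σ A)} (h : SelR r T)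
    (hT : T ≤ T') : SelR r T' :=
  ⟨fun p f hp => hT _ _ (h.inl p f hp), fun p b hp => by
    obtain ⟨S, hS, hb⟩ := h.inr p b hp
    exact ⟨S, hT _ _ hS, hb⟩⟩

theorem SelR.eq_bot {T : Coterm σ (OIdl σ A)} (hT : T = ⊥) {r : Coterm σ A}
    (h : SelR r T) : r = ⊥ := by
  subst hT
  apply Coterm.ext'; funext p
  rw [bot_label]
  cases hp : r.label p with
  | none => rfl
  | some v =>
    cases v with
    | inl f => have := h.inl p f hp; rw [bot_label] at this; exact absurd this (by simp)
    | inr b =>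
      obtain ⟨S, hS, -⟩ := h.inr p b hp
      rw [bot_label] at hS; exact absurd hS (by simp)

variable {β : Coterm σ A → A}

/-- Choice of an upper bound of two members of the ideal labelling `T` at `p`. -/
noncomputable def ubIn (T : Coterm σ (OIdl σ A)) (p : List ℕ) (b b' : A) : A :=
  if h : ∃ S : OIdl σ A, T.label p = some (Sum.inr S) ∧ b ∈ S.1 ∧ b' ∈ S.1 then
    (h.choose.2.2.2 b h.choose_spec.2.1 b' h.choose_spec.2.2).choose
  else b

theorem ubIn_spec {T : Coterm σ (OIdl σ A)} {p : List ℕ} {b b' : A} {S : OIdl σ A}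
    (hT : T.label p = some (Sum.inr S)) (hb : b ∈ S.1) (hb' : b' ∈ S.1) :
    ubIn T p b b' ∈ S.1 ∧ b ≤ ubIn T p b b' ∧ b' ≤ ubIn T p b b' := by
  have h : ∃ S : OIdl σ A, T.label p = some (Sum.inr S) ∧ b ∈ S.1 ∧ b' ∈ S.1 :=
    ⟨S, hT, hb, hb'⟩
  have hSeq : h.choose = S := by
    have h2 := hT.symm.trans h.choose_spec.1
    exact (Sum.inr.inj (Option.some.inj h2)).symm
  obtain ⟨h1, h2, h3⟩ := (h.choose.2.2.2 b h.choose_spec.2.1 b' h.choose_spec.2.2).choose_spec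
  rw [ubIn, dif_pos h]
  refine ⟨?_, h2, h3⟩
  rw [← hSeq]
  exact h1

/-- The label function of the join of two selections. -/
noncomputable def joinLabel (T : Coterm σ (OIdl σ A)) (r r' : Coterm σ A)
    (p : List ℕ) : Option (σ.symb ⊕ A) :=
  match r.label p, r'.label p with
  | some (Sum.inr b), some (Sum.inr b') => some (Sum.inr (ubIn T p b b'))
  | some v, _ => some v
  | none, o => o

theorem joinLabel_inl {T : Coterm σ (OIdl σ A)} {r r' : Coterm σ A} {p : List ℕ}
    {f : σ.symb} (hf : r.label p = some (Sum.inl f)) :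
    joinLabel T r r' p = some (Sum.inl f) := by
  unfold joinLabel
  rw [hf]

theorem joinLabel_none {T : Coterm σ (OIdl σ A)} {r r' : Coterm σ A} {p : List ℕ}
    (hf : r.label p = none) : joinLabel T r r' p = r'.label p := by
  unfold joinLabel
  rw [hf]

theorem joinLabel_inr_inr {T : Coterm σ (OIdl σ A)} {r r' : Coterm σ A} {p : List ℕ}
    {b b' : A} (hb : r.label p = some (Sum.inr b)) (hb' : r'.label p = some (Sum.inr b')) :
    joinLabel T r r' p = some (Sum.inr (ubIn T p b b')) := by
  unfold joinLabel
  rw [hb, hb']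

theorem joinLabel_inr_none {T : Coterm σ (OIdl σ A)} {r r' : Coterm σ A} {p : List ℕ}
    {b : A} (hb : r.label p = some (Sum.inr b)) (hb' : r'.label p = none) :
    joinLabel T r r' p = some (Sum.inr b) := by
  unfold joinLabel
  rw [hb, hb']

/-- Join of two selections. -/
theorem selR_join {alg : OrderedAlg σ A} (hβ : IsFinInterp alg β)
    {r r' : Coterm σ A} {T : Coterm σ (OIdl σ A)}
    (hrf : r.IsFinite) (hrf' : r'.IsFinite) (h1 : SelR r T) (h2 : SelR r' T) :
    ∃ r'' : Coterm σ A, r''.IsFinite ∧ SelR r'' T ∧ β r ≤ β r'' ∧ β r' ≤ β r'' := by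
  classical
  have compat : ∀ p f b, r.label p = some (Sum.inl f) →
      r'.label p ≠ some (Sum.inr b) := by
    intro p f b hf hb
    obtain ⟨S, hS, -⟩ := h2.inr p b hb
    rw [h1.inl p f hf] at hS
    simp at hS
  have compat' : ∀ p f b, r'.label p = some (Sum.inl f) →
      r.label p ≠ some (Sum.inr b) := by
    intro p f b hf hb
    obtain ⟨S, hS, -⟩ := h1.inr p b hb
    rw [h2.inl p f hf] at hS
    simp at hS
  have compatf : ∀ p f f', r.label p = some (Sum.inl f) →
      r'.label p = some (Sum.inl f') → f = f' := by
    intro p f f' hf hf'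
    have := h1.inl p f hf
    rw [h2.inl p f' hf'] at this
    simpa using this.symm
  have Lcases : ∀ p v, joinLabel T r r' p = some v →
      (r.label p = some v ∧ (∀ b', r'.label p ≠ some (Sum.inr b'))) ∨
      (r.label p = none ∧ r'.label p = some v) ∨
      (∃ b b', r.label p = some (Sum.inr b) ∧ r'.label p = some (Sum.inr b') ∧
        v = Sum.inr (ubIn T p b b')) := by
    intro p v hv
    cases hr : r.label p with
    | none =>
      right; left
      rw [← hv, joinLabel_none hr]
      exact ⟨rfl, rfl⟩
    | some w =>
      cases w with
      | inl f =>
        left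
        rw [joinLabel_inl hr] at hv
        refine ⟨hv, ?_⟩
        intro b' hb'
        exact compat p f b' hr hb'
      | inr b =>
        cases hr' : r'.label p with
        | none =>
          left
          rw [joinLabel_inr_none hr hr'] at hv
          exact ⟨hv, by intro b' h; simp at h⟩
        | some w' =>
          cases w' with
          | inl f' => exact absurd hr (compat' p f' b hr')
          | inr b' =>
            right; right
            refine ⟨b, b', rfl, rfl, ?_⟩
            rw [joinLabel_inr_inr hr hr'] at hv
            simpa using hv.symm
  have hcons : ∀ p i, (joinLabel T r r' (p ++ [i])).isSome →
      ∃ f, joinLabel T r r' p = some (Sum.inl f) ∧ i < σ.ar f := by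
    intro p i hp
    rw [Option.isSome_iff_exists] at hp
    obtain ⟨v, hv⟩ := hp
    rcases Lcases _ _ hv with ⟨hr, -⟩ | ⟨hr, hr'⟩ | ⟨b, b', hr, hr', rfl⟩
    · obtain ⟨f, hf, hlt⟩ := r.consistent p i (by rw [hr]; rfl)
      exact ⟨f, joinLabel_inl hf, hlt⟩
    · obtain ⟨f, hf, hlt⟩ := r'.consistent p i (by rw [hr']; rfl)
      refine ⟨f, ?_, hlt⟩
      cases hrp : r.label p with
      | none => rw [joinLabel_none hrp]; exact hf
      | some w =>
        cases w with
        | inl g =>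
          obtain rfl : g = f := compatf p g f hrp hf
          exact joinLabel_inl hrp
        | inr b => exact absurd hrp (compat' p f b hf)
    · obtain ⟨f, hf, hlt⟩ := r.consistent p i (by rw [hr]; rfl)
      exact ⟨f, joinLabel_inl hf, hlt⟩
  set r'' : Coterm σ A := ⟨joinLabel T r r', hcons⟩ with hr''
  have hr''lab : ∀ p, r''.label p = joinLabel T r r' p := fun p => rfl
  have hfin : r''.IsFinite := by
    apply Set.Finite.subset (hrf.union hrf')
    intro p hp
    rw [Set.mem_setOf_eq, hr''lab, Option.isSome_iff_exists] at hp
    obtain ⟨v, hv⟩ := hp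
    rcases Lcases _ _ hv with ⟨hr, -⟩ | ⟨-, hr'⟩ | ⟨b, b', hr, -, -⟩
    · exact Or.inl (by rw [Set.mem_setOf_eq, hr]; rfl)
    · exact Or.inr (by rw [Set.mem_setOf_eq, hr']; rfl)
    · exact Or.inl (by rw [Set.mem_setOf_eq, hr]; rfl)
  have hsel : SelR r'' T := by
    constructor
    · intro p f hp
      rw [hr''lab] at hp
      rcases Lcases _ _ hp with ⟨hr, -⟩ | ⟨-, hr'⟩ | ⟨b, b', hr, hr', heq⟩
      · exact h1.inl p f hr
      · exact h2.inl p f hr'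
      · exact absurd heq (by simp)
    · intro p b0 hp
      rw [hr''lab] at hp
      rcases Lcases _ _ hp with ⟨hr, -⟩ | ⟨-, hr'⟩ | ⟨b, b', hr, hr', heq⟩
      · exact h1.inr p b0 hr
      · exact h2.inr p b0 hr'
      · obtain ⟨S, hS, hb⟩ := h1.inr p b hr
        obtain ⟨S', hS', hb'⟩ := h2.inr p b' hr'
        obtain rfl : S = S' := by rw [hS] at hS'; simpa using hS'
        obtain rfl : b0 = ubIn T p b b' := by simpa using heq
        exact ⟨S, hS, (ubIn_spec hS hb hb').1⟩
  refine ⟨r'', hfin, hsel, ?_, ?_⟩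
  · refine interp_mono_plus hβ r hrf r'' hfin ?_ ?_
    · intro p f hp
      rw [hr''lab]
      exact joinLabel_inl hp
    · intro p b hp
      cases hr' : r'.label p with
      | none => exact ⟨b, by rw [hr''lab, joinLabel_inr_none hp hr'], le_refl b⟩
      | some w =>
        cases w with
        | inl f => exact absurd hp (compat' p f b hr')
        | inr b' =>
          obtain ⟨S, hS, hb⟩ := h1.inr p b hp
          obtain ⟨S', hS', hb'⟩ := h2.inr p b' hr'
          obtain rfl : S = S' := by rw [hS] at hS'; simpa using hS'
          exact ⟨ubIn T p b b', by rw [hr''lab, joinLabel_inr_inr hp hr'],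
            (ubIn_spec hS hb hb').2.1⟩
  · refine interp_mono_plus hβ r' hrf' r'' hfin ?_ ?_
    · intro p f hp
      cases hr : r.label p with
      | none => rw [hr''lab, joinLabel_none hr]; exact hp
      | some w =>
        cases w with
        | inl g =>
          obtain rfl : g = f := compatf p g f hr hp
          rw [hr''lab]; exact joinLabel_inl hr
        | inr b => exact absurd hr (compat' p f b hp)
    · intro p b' hp
      cases hr : r.label p with
      | none => exact ⟨b', by rw [hr''lab, joinLabel_none hr]; exact hp, le_refl b'⟩
      | some w =>
        cases w with
        | inl f => exact absurd hp (compat p f b' hr)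
        | inr b =>
          obtain ⟨S, hS, hb⟩ := h1.inr p b hr
          obtain ⟨S', hS', hb'⟩ := h2.inr p b' hp
          obtain rfl : S = S' := by rw [hS] at hS'; simpa using hS'
          exact ⟨ubIn T p b b', by rw [hr''lab, joinLabel_inr_inr hr hp],
            (ubIn_spec hS hb hb').2.2⟩

/-- The extended interpretation on coterms over ideals. -/
noncomputable def interp {alg : OrderedAlg σ A} (hβ : IsFinInterp alg β)
    (T : Coterm σ (OIdl σ A)) : OIdl σ A := by
  refine ⟨{x | ∃ r : Coterm σ A, r.IsFinite ∧ SelR r T ∧ x ≤ β r},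
    ⟨⊥, ⊥, isFinite_bot, SelR.bot, bot_le⟩, ?_, ?_⟩
  · rintro x y hyx ⟨r, hf, hs, hx⟩
    exact ⟨r, hf, hs, hyx.trans hx⟩
  · rintro x ⟨r, hf, hs, hx⟩ y ⟨r', hf', hs', hy⟩
    obtain ⟨r'', hfin, hsel, hle1, hle2⟩ := selR_join hβ hf hf' hs hs'
    exact ⟨β r'', ⟨r'', hfin, hsel, le_refl _⟩, hx.trans hle1, hy.trans hle2⟩

theorem mem_interp {alg : OrderedAlg σ A} {hβ : IsFinInterp alg β}
    {T : Coterm σ (OIdl σ A)} {x : A} :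
    x ∈ (interp hβ T).1 ↔ ∃ r : Coterm σ A, r.IsFinite ∧ SelR r T ∧ x ≤ β r :=
  Iff.rfl

end OIdl

end DelAux
namespace Coterm

variable {σ : Signature} {X Y : Type*}

theorem rename_label_inl_iff {h : X → Y} {t : Coterm σ X} {p : List ℕ} {f : σ.symb} :
    (rename h t).label p = some (Sum.inl f) ↔ t.label p = some (Sum.inl f) := by
  rw [rename_label]
  cases ht : t.label p with
  | none => simp
  | some v => cases v <;> simp

theorem rename_label_inr_iff {h : X → Y} {t : Coterm σ X} {p : List ℕ} {b : Y} :
    (rename h t).label p = some (Sum.inr b) ↔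
      ∃ x, t.label p = some (Sum.inr x) ∧ h x = b := by
  rw [rename_label]
  cases ht : t.label p with
  | none => simp
  | some v => cases v <;> simp

end Coterm

namespace OIdl

open Coterm

variable {σ : Signature} {A : Type} [PartialOrder A] [OrderBot A]
  {alg : OrderedAlg σ A} {β : Coterm σ A → A}

theorem interp_bot (hβ : IsFinInterp alg β) :
    interp hβ (⊥ : Coterm σ (OIdl σ A)) = ⊥ := by
  apply Subtype.ext
  ext x
  rw [bot_val]
  constructor
  · rintro ⟨r, hf, hs, hx⟩
    have hr : r = ⊥ := SelR.eq_bot rfl hs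
    rw [hr, hβ.1] at hx
    exact Set.mem_Iic.mpr hx
  · intro hx
    exact ⟨⊥, isFinite_bot, SelR.bot, by rw [hβ.1]; exact hx⟩

theorem var_no_inl {X : Type*} {x : X} {p : List ℕ} {f : σ.symb} :
    (var x : Coterm σ X).label p ≠ some (Sum.inl f) := by
  rcases eq_or_ne p [] with rfl | hp
  · rw [var_label_nil]; simp
  · rw [var_label_ne_nil x hp]; simp

theorem var_label_inr {X : Type*} {x b : X} {p : List ℕ}
    (h : (var x : Coterm σ X).label p = some (Sum.inr b)) : p = [] ∧ b = x := by
  rcases eq_or_ne p [] with rfl | hp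
  · rw [var_label_nil] at h
    exact ⟨rfl, by simpa using h.symm⟩
  · rw [var_label_ne_nil x hp] at h; exact absurd h (by simp)

theorem interp_var (hβ : IsFinInterp alg β) (S : OIdl σ A) :
    interp hβ (var S) = S := by
  apply Subtype.ext
  ext x
  constructor
  · rintro ⟨r, hf, hs, hx⟩
    cases h0 : r.label [] with
    | none =>
      rw [eq_bot_of_label_nil h0, hβ.1] at hx
      exact S.2.2.1 (hx.trans bot_le) (bot_mem S)
    | some v =>
      cases v with
      | inl f => exact absurd (hs.inl [] f h0) var_no_inl
      | inr b =>
        obtain ⟨S', hS', hb⟩ := hs.inr [] b h0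
        rw [var_label_nil] at hS'
        obtain rfl : S = S' := by simpa using hS'
        rw [eq_var_of_label_nil h0, hβ.2.1] at hx
        exact S.2.2.1 hx hb
  · intro hx
    refine ⟨var x, isFinite_var x, ?_, by rw [hβ.2.1]⟩
    constructor
    · intro p f hp
      exact absurd hp var_no_inl
    · intro p b hp
      obtain ⟨rfl, rfl⟩ := var_label_inr hp
      exact ⟨S, var_label_nil S, hx⟩

theorem interp_node (hβ : IsFinInterp alg β) (f : σ.symb)
    (Ts : Fin (σ.ar f) → Coterm σ (OIdl σ A)) :
    interp hβ (node f Ts) = op alg f (fun i => interp hβ (Ts i)) := by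
  apply Subtype.ext
  ext x
  constructor
  · rintro ⟨r, hrfin, hs, hx⟩
    cases h0 : r.label [] with
    | none =>
      rw [eq_bot_of_label_nil h0, hβ.1] at hx
      exact ⟨fun _ => ⊥, fun i => bot_mem _, hx.trans bot_le⟩
    | some v =>
      cases v with
      | inr b =>
        obtain ⟨S', hS', -⟩ := hs.inr [] b h0
        rw [node_label_nil] at hS'
        exact absurd hS' (by simp)
      | inl f₀ =>
        have hf₀ : (node f Ts).label [] = some (Sum.inl f₀) := hs.inl [] f₀ h0
        rw [node_label_nil] at hf₀
        obtain rfl : f₀ = f := by simpa using hf₀.symm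
        have hxr : x ≤ alg.op f₀ (fun i => β (subtree r (i : ℕ))) := by
          rw [eq_node_of_label_nil h0,
            hβ.2.2.1 _ _ (fun i => isFinite_subtree hrfin _)] at hx
          exact hx
        refine ⟨fun i => β (subtree r (i : ℕ)), fun i => ?_, hxr⟩
        refine ⟨subtree r (i : ℕ), isFinite_subtree hrfin _, ?_, le_refl _⟩
        constructor
        · intro p g hp
          rw [subtree_label] at hp
          have := hs.inl _ g hp
          rw [node_label_cons _ _ i.isLt] at this
          simpa using this
        · intro p b hp
          rw [subtree_label] at hp
          obtain ⟨S, hS, hb⟩ := hs.inr _ b hp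
          rw [node_label_cons _ _ i.isLt] at hS
          exact ⟨S, by simpa using hS, hb⟩
  · rintro ⟨a, ha, hx⟩
    have hch : ∀ i, ∃ r : Coterm σ A, r.IsFinite ∧ SelR r (Ts i) ∧ a i ≤ β r :=
      fun i => ha i
    choose rr hrf hrsel hrle using hch
    refine ⟨node f rr, isFinite_node hrf, ?_, ?_⟩
    · constructor
      · intro p g hp
        cases p with
        | nil =>
          rw [node_label_nil] at hp
          obtain rfl : g = f := by simpa using hp.symm
          rw [node_label_nil]
        | cons j q =>
          by_cases hj : j < σ.ar f
          · rw [node_label_cons _ _ hj] at hp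
            rw [node_label_cons _ _ hj]
            exact (hrsel _).inl q g hp
          · rw [node_label_cons_of_ge _ _ hj] at hp
            exact absurd hp (by simp)
      · intro p b hp
        cases p with
        | nil =>
          rw [node_label_nil] at hp
          exact absurd hp (by simp)
        | cons j q =>
          by_cases hj : j < σ.ar f
          · rw [node_label_cons _ _ hj] at hp
            obtain ⟨S, hS, hb⟩ := (hrsel _).inr q b hp
            refine ⟨S, ?_, hb⟩
            rw [node_label_cons _ _ hj]
            exact hS
          · rw [node_label_cons_of_ge _ _ hj] at hp
            exact absurd hp (by simp)
    · rw [hβ.2.2.1 _ _ hrf]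
      exact hx.trans (alg.mono f a _ hrle)

theorem interp_mono (hβ : IsFinInterp alg β) {T T' : Coterm σ (OIdl σ A)}
    (h : T ≤ T') : interp hβ T ≤ interp hβ T' := by
  rintro x ⟨r, hf, hs, hx⟩
  exact ⟨r, hf, hs.mono h, hx⟩

theorem interp_isLUB_approx (hβ : IsFinInterp alg β) (T : Coterm σ (OIdl σ A)) :
    IsLUB {I : OIdl σ A | ∃ s, Coterm.Ll s T ∧ I = interp hβ s} (interp hβ T) := by
  constructor
  · rintro _ ⟨s, hll, rfl⟩
    exact interp_mono hβ hll.2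
  · intro J hJ
    rintro x ⟨r, hfin, hsel, hx⟩
    have hS : SelR r (restr T r) := by
      constructor
      · intro p g hp
        rw [restr_label, if_pos (by rw [hp]; rfl)]
        exact hsel.inl p g hp
      · intro p b hp
        obtain ⟨S, hS, hb⟩ := hsel.inr p b hp
        refine ⟨S, ?_, hb⟩
        rw [restr_label, if_pos (by rw [hp]; rfl)]
        exact hS
    have hmem : x ∈ (interp hβ (restr T r)).1 := ⟨r, hfin, hS, hx⟩
    have hle : interp hβ (restr T r) ≤ J :=
      hJ ⟨restr T r, ⟨isFinite_restr T hfin, restr_le T r⟩, rfl⟩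
    exact hle hmem

/-- Supremum of a set of ideals. -/
def supIdl (F : Set (OIdl σ A)) (hne : F.Nonempty) (hdir : DirectedOn (· ≤ ·) F) :
    OIdl σ A := by
  refine ⟨{x | ∃ I ∈ F, x ∈ I.1}, ?_, ?_, ?_⟩
  · obtain ⟨I, hI⟩ := hne
    exact ⟨⊥, I, hI, bot_mem I⟩
  · rintro x y hyx ⟨I, hI, hx⟩
    exact ⟨I, hI, I.2.2.1 hyx hx⟩
  · rintro x ⟨I, hI, hx⟩ y ⟨J, hJ, hy⟩
    obtain ⟨K, hK, hIK, hJK⟩ := hdir I hI J hJ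
    obtain ⟨z, hz, hxz, hyz⟩ := K.2.2.2 x (hIK hx) y (hJK hy)
    exact ⟨z, ⟨K, hK, hz⟩, hxz, hyz⟩

theorem isLUB_supIdl (F : Set (OIdl σ A)) (hne : F.Nonempty)
    (hdir : DirectedOn (· ≤ ·) F) : IsLUB F (supIdl F hne hdir) := by
  constructor
  · intro I hI x hx
    exact ⟨I, hI, hx⟩
  · intro J hJ
    rintro x ⟨I, hI, hx⟩
    exact hJ hI hx

theorem isLUB_val {F : Set (OIdl σ A)} {b : OIdl σ A} (hne : F.Nonempty)
    (hdir : DirectedOn (· ≤ ·) F) (h : IsLUB F b) :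
    b.1 = {x | ∃ I ∈ F, x ∈ I.1} := by
  have := h.unique (isLUB_supIdl F hne hdir)
  rw [this]
  rfl

theorem op_cont (f : σ.symb) (as : Fin (σ.ar f) → OIdl σ A) (i : Fin (σ.ar f))
    (S : Set (OIdl σ A)) (b : OIdl σ A) (hne : S.Nonempty)
    (hdir : DirectedOn (· ≤ ·) S) (hb : IsLUB S b) :
    IsLUB {x : OIdl σ A | ∃ d ∈ S, x = op alg f (Function.update as i d)}
      (op alg f (Function.update as i b)) := by
  have hval : b.1 = {x | ∃ I ∈ S, x ∈ I.1} := isLUB_val hne hdir hb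
  constructor
  · rintro _ ⟨d, hd, rfl⟩
    apply (idlAlg alg).mono
    intro j
    by_cases hj : j = i
    · subst hj
      simp only [Function.update_self]
      exact hb.1 hd
    · simp only [Function.update_of_ne hj]
      exact le_refl _
  · intro J hJ
    rintro x ⟨a, ha, hx⟩
    have hai : a i ∈ b.1 := by
      have := ha i
      rwa [Function.update_self] at this
    rw [hval] at hai
    obtain ⟨d, hd, had⟩ := hai
    have hx' : x ∈ (op alg f (Function.update as i d)).1 := by
      refine ⟨a, fun j => ?_, hx⟩
      by_cases hj : j = i
      · subst hj
        rw [Function.update_self]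
        exact had
      · rw [Function.update_of_ne hj]
        have := ha j
        rwa [Function.update_of_ne hj] at this
    exact hJ ⟨d, hd, rfl⟩ hx'

/-- The ideal completion as an ω-continuous algebra. -/
noncomputable def idlCont (alg : OrderedAlg σ A) (β : Coterm σ A → A)
    (hβ : IsFinInterp alg β) : OmegaContAlg σ where
  A := OIdl σ A
  po := inferInstance
  ob := inferInstance
  alg := idlAlg alg
  interp := interp hβ
  str := by
    refine ⟨interp_bot hβ, interp_var hβ, interp_node hβ,
      fun T T' h => interp_mono hβ h, interp_isLUB_approx hβ, ?_,
      fun f as i S b _ hne hdir hb => op_cont f as i S b hne hdir hb⟩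
    intro S _ hne hdir
    exact ⟨supIdl S hne hdir, isLUB_supIdl S hne hdir⟩

/-- The ideal completion satisfies all inequations that `A` satisfies. -/
theorem idl_satisfies (hβ : IsFinInterp alg β)
    {E : Set (Coterm σ ℕ × Coterm σ ℕ)}
    (hE : ∀ e ∈ E, (e.1).IsFinite ∧ (e.2).IsFinite)
    (hsat : SatisfiesIneqs β E) :
    SatisfiesIneqs (interp hβ (alg := alg)) E := by
  intro e he v
  rintro x ⟨r, hrfin, hsel, hx⟩
  -- upper bounds of the leaf values of `r` within each ideal `v n`
  have hw : ∀ n : ℕ, ∃ z ∈ (v n).1,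
      ∀ y ∈ {b : A | ∃ p, r.label p = some (Sum.inr b) ∧
          e.1.label p = some (Sum.inr n)}, y ≤ z := by
    intro n
    refine directedOn_exists_ub_finite (v n).2.2.2 (v n).2.1 ?_ ?_
    · -- finiteness of the leaf-value set
      have : {b : A | ∃ p, r.label p = some (Sum.inr b) ∧
          e.1.label p = some (Sum.inr n)} ⊆
          (fun p => ((r.label p).elim ⊥ (Sum.elim (fun _ => (⊥ : A)) id))) ''
            {p | (r.label p).isSome} := by
        rintro b ⟨p, hb, -⟩
        exact ⟨p, by simp [hb], by simp [hb]⟩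
      exact Set.Finite.subset (hrfin.image _) this
    · rintro b ⟨p, hb, hn⟩
      obtain ⟨S, hS, hbS⟩ := hsel.inr p b hb
      rw [rename_label_inr_iff] at hS
      obtain ⟨m, hm, hvm⟩ := hS
      rw [hn] at hm
      obtain rfl : n = m := by simpa using hm
      rw [hvm]
      exact hbS
  choose w hw1 hw2 using hw
  have h1 : β r ≤ β (Coterm.rename w e.1) := by
    refine interp_mono_plus hβ r hrfin _ (isFinite_rename (hE e he).1) ?_ ?_
    · intro p g hp
      rw [rename_label_inl_iff]
      rw [← rename_label_inl_iff (h := v)]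
      exact hsel.inl p g hp
    · intro p b hp
      obtain ⟨S, hS, hbS⟩ := hsel.inr p b hp
      rw [rename_label_inr_iff] at hS
      obtain ⟨n, hn, hvn⟩ := hS
      refine ⟨w n, ?_, hw2 n b ⟨p, hp, hn⟩⟩
      rw [rename_label_inr_iff]
      exact ⟨n, hn, rfl⟩
  have h2 : β (Coterm.rename w e.1) ≤ β (Coterm.rename w e.2) := hsat e he w
  refine ⟨Coterm.rename w e.2, isFinite_rename (hE e he).2, ?_, hx.trans (h1.trans h2)⟩
  constructor
  · intro p g hp
    rw [rename_label_inl_iff] at hp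
    rw [rename_label_inl_iff]
    exact hp
  · intro p b hp
    rw [rename_label_inr_iff] at hp
    obtain ⟨n, hn, rfl⟩ := hp
    refine ⟨v n, ?_, hw1 n⟩
    rw [rename_label_inr_iff]
    exact ⟨n, hn, rfl⟩

/-- Valuations by principal ideals give the down-closure of the finite
approximant values. -/
theorem interp_rename_prin (hβ : IsFinInterp alg β) {X : Type*} (h : X → A)
    (u : Coterm σ X) :
    (interp hβ (Coterm.rename (fun x => prin σ (h x)) u)).1 =
      {x | ∃ y ∈ {y : A | ∃ s, Coterm.Ll s u ∧ y = β (Coterm.rename h s)}, x ≤ y} := by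
  ext x
  constructor
  · rintro ⟨r, hrfin, hsel, hx⟩
    refine ⟨β (Coterm.rename h (restr u r)),
      ⟨restr u r, ⟨isFinite_restr u hrfin, restr_le u r⟩, rfl⟩, ?_⟩
    refine hx.trans (interp_mono_plus hβ r hrfin _
      (isFinite_rename (isFinite_restr u hrfin)) ?_ ?_)
    · intro p g hp
      have := hsel.inl p g hp
      rw [rename_label_inl_iff] at this
      rw [rename_label_inl_iff, restr_label, if_pos (by rw [hp]; rfl)]
      exact this
    · intro p b hp
      obtain ⟨S, hS, hbS⟩ := hsel.inr p b hp
      rw [rename_label_inr_iff] at hS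
      obtain ⟨x₀, hx₀, hpr⟩ := hS
      refine ⟨h x₀, ?_, ?_⟩
      · rw [rename_label_inr_iff]
        exact ⟨x₀, by rw [restr_label, if_pos (by rw [hp]; rfl)]; exact hx₀, rfl⟩
      · rw [← hpr] at hbS
        exact hbS
  · rintro ⟨y, ⟨s, hll, rfl⟩, hxy⟩
    refine ⟨Coterm.rename h s, isFinite_rename hll.1, ?_, hxy⟩
    constructor
    · intro p g hp
      rw [rename_label_inl_iff] at hp
      rw [rename_label_inl_iff]
      exact hll.2 _ _ hp
    · intro p b hp
      rw [rename_label_inr_iff] at hp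
      obtain ⟨x₀, hx₀, rfl⟩ := hp
      refine ⟨prin σ (h x₀), ?_, le_refl _⟩
      rw [rename_label_inr_iff]
      exact ⟨x₀, hll.2 _ _ hx₀, rfl⟩

end OIdl
section MainAux

open Coterm

variable {σ : Signature}

/-- Every finite coterm lies in every quasi-regular family. -/
theorem finite_mem_del (Q : QuasiRegular σ) (X : Type) :
    ∀ t : Coterm σ X, t.IsFinite → t ∈ Q.Del X :=
  Coterm.finite_induction (Q.bot_mem X) (Q.var_mem X)
    (fun f ts _ ih => Q.op_closed X f ts ih)

variable {F : Type*} [PartialOrder F] [OrderBot F]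
  {algω : OrderedAlg σ F} {βω : Coterm σ F → F}

theorem omega_subst_isLUB (hω : IsOmegaContStructure algω βω)
    (k : F → Coterm σ F) (u : Coterm σ F) :
    IsLUB {x | ∃ s, Coterm.Ll s u ∧ x = βω (Coterm.subst k s)}
      (βω (Coterm.subst k u)) := by
  constructor
  · rintro x ⟨s, hll, rfl⟩
    exact hω.2.2.2.1 (subst_mono k hll.2)
  · intro w hw
    refine (hω.2.2.2.2.1 (Coterm.subst k u)).2 ?_
    rintro x ⟨s', hll', rfl⟩
    obtain ⟨s, hsu, hle⟩ := ll_subst hll'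
    exact (hω.2.2.2.1 hle).trans (hw ⟨s, hsu, rfl⟩)

theorem omega_subst_congr_fin (hω : IsOmegaContStructure algω βω)
    (k₁ k₂ : F → Coterm σ F) :
    ∀ s : Coterm σ F, s.IsFinite →
      (∀ p a, s.label p = some (Sum.inr a) → βω (k₁ a) = βω (k₂ a)) →
      βω (Coterm.subst k₁ s) = βω (Coterm.subst k₂ s) := by
  refine Coterm.finite_induction (P := fun s =>
    (∀ p a, s.label p = some (Sum.inr a) → βω (k₁ a) = βω (k₂ a)) →
      βω (Coterm.subst k₁ s) = βω (Coterm.subst k₂ s)) ?_ ?_ ?_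
  · intro _
    rw [subst_bot, subst_bot]
  · intro a H
    rw [subst_var, subst_var]
    exact H [] a (var_label_nil a)
  · intro f ts hfin ih H
    rw [subst_node, subst_node, hω.2.2.1, hω.2.2.1]
    congr 1
    funext i
    refine ih i ?_
    intro p a hp
    refine H ((i : ℕ) :: p) a ?_
    rw [node_label_cons _ _ i.isLt]
    simpa using hp

theorem omega_subst_congr (hω : IsOmegaContStructure algω βω)
    {k₁ k₂ : F → Coterm σ F} (u : Coterm σ F)
    (H : ∀ p a, u.label p = some (Sum.inr a) → βω (k₁ a) = βω (k₂ a)) :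
    βω (Coterm.subst k₁ u) = βω (Coterm.subst k₂ u) := by
  have e : {x | ∃ s, Coterm.Ll s u ∧ x = βω (Coterm.subst k₁ s)} =
      {x | ∃ s, Coterm.Ll s u ∧ x = βω (Coterm.subst k₂ s)} := by
    ext x
    constructor
    · rintro ⟨s, hll, rfl⟩
      exact ⟨s, hll, omega_subst_congr_fin hω k₁ k₂ s hll.1
        (fun p a hp => H p a (hll.2 _ _ hp))⟩
    · rintro ⟨s, hll, rfl⟩
      exact ⟨s, hll, (omega_subst_congr_fin hω k₁ k₂ s hll.1
        (fun p a hp => H p a (hll.2 _ _ hp))).symm⟩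
  exact (omega_subst_isLUB hω k₁ u).unique (e ▸ omega_subst_isLUB hω k₂ u)

variable {A : Type} [PartialOrder A] [OrderBot A]
  {Q : QuasiRegular σ} {alg : OrderedAlg σ A} {β : Coterm σ A → A}

theorem op_isLUB_all (hδ : IsDelStructure Q alg β) (f : σ.symb)
    (ts : Fin (σ.ar f) → Coterm σ A) (hts : ∀ i, ts i ∈ Q.Del A) :
    IsLUB {x | ∃ sv : Fin (σ.ar f) → Coterm σ A,
        (∀ i, Coterm.Ll (sv i) (ts i)) ∧ x = alg.op f (fun i => β (sv i))}
      (alg.op f (fun i => β (ts i))) := by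
  constructor
  · rintro x ⟨sv, hsv, rfl⟩
    exact alg.mono f _ _ (fun i => (hδ.2.1 (ts i) (hts i)).1 ⟨sv i, hsv i, rfl⟩)
  · intro w hw
    have Aux : ∀ m, ∀ as : Fin (σ.ar f) → A,
        (∀ i : Fin (σ.ar f), ((σ.ar f - m ≤ (i : ℕ)) → as i = β (ts i)) ∧
          (((i : ℕ) < σ.ar f - m) → ∃ s', Coterm.Ll s' (ts i) ∧ as i = β s')) →
        alg.op f as ≤ w := by
      intro m
      induction m with
      | zero =>
        intro as has
        have hch : ∀ i : Fin (σ.ar f), ∃ s', Coterm.Ll s' (ts i) ∧ as i = β s' :=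
          fun i => (has i).2 (by have := i.isLt; omega)
        choose sv hsv1 hsv2 using hch
        have hase : as = fun i => β (sv i) := funext fun i => hsv2 i
        rw [hase]
        exact hw ⟨sv, hsv1, rfl⟩
      | succ m ih =>
        intro as has
        by_cases hmn : m < σ.ar f
        · have hj : σ.ar f - (m + 1) < σ.ar f := by omega
          set i₀ : Fin (σ.ar f) := ⟨σ.ar f - (m + 1), hj⟩ with hi₀
          have h3 := hδ.2.2 f as i₀ (ts i₀) (hts i₀)
          have heq : Function.update as i₀ (β (ts i₀)) = as := by
            funext j
            rcases eq_or_ne j i₀ with heq | hne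
            · rw [heq, Function.update_self]
              exact ((has i₀).1 (le_refl _)).symm
            · rw [Function.update_of_ne hne]
          rw [← heq]
          refine h3.2 ?_
          rintro x ⟨s', hs', rfl⟩
          refine ih (Function.update as i₀ (β s')) ?_
          intro i
          have hval : (i₀ : ℕ) = σ.ar f - (m + 1) := rfl
          constructor
          · intro hi
            have hne : i ≠ i₀ := by
              intro hcontra
              rw [hcontra, hval] at hi
              omega
            rw [Function.update_of_ne hne]
            exact (has i).1 (by omega)
          · intro hi
            rcases eq_or_ne i i₀ with rfl | hne
            · rw [Function.update_self]
              exact ⟨s', hs', rfl⟩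
            · rw [Function.update_of_ne hne]
              refine (has i).2 ?_
              have : (i : ℕ) ≠ σ.ar f - (m + 1) := by
                intro hcontra
                exact hne (Fin.ext (by rw [hcontra, hval]))
              omega
        · have h0 : σ.ar f - (m + 1) = σ.ar f - m := by omega
          rw [h0] at has
          exact ih as has
    refine Aux (σ.ar f) (fun i => β (ts i)) ?_
    intro i
    exact ⟨fun _ => rfl, fun hi => absurd hi (by omega)⟩

theorem lemM {F' : Type*} (hβ : IsFinInterp alg β)
    (kB : F' → Coterm σ A) (gv : F' → A) :
    ∀ s : Coterm σ F', s.IsFinite →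
      (∀ p a, s.label p = some (Sum.inr a) →
        IsLUB {x | ∃ r', Coterm.Ll r' (kB a) ∧ x = β r'} (gv a)) →
      ∀ r : Coterm σ A, r.IsFinite → r ≤ Coterm.subst kB s →
      β r ≤ β (Coterm.rename gv s) := by
  refine Coterm.finite_induction (P := fun s =>
    (∀ p a, s.label p = some (Sum.inr a) →
        IsLUB {x | ∃ r', Coterm.Ll r' (kB a) ∧ x = β r'} (gv a)) →
      ∀ r : Coterm σ A, r.IsFinite → r ≤ Coterm.subst kB s →
      β r ≤ β (Coterm.rename gv s)) ?_ ?_ ?_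
  · intro _ r _ hr
    rw [subst_bot, le_bot_iff] at hr
    rw [hr, hβ.1]
    exact bot_le
  · intro a H r hrfin hr
    rw [subst_var] at hr
    rw [rename_var, hβ.2.1]
    exact (H [] a (var_label_nil a)).1 ⟨r, ⟨hrfin, hr⟩, rfl⟩
  · intro f ts hfin ih H r hrfin hr
    rw [subst_node] at hr
    rcases ll_node_cases ⟨hrfin, hr⟩ with rfl | ⟨rv, hrv, rfl⟩
    · rw [hβ.1]
      exact bot_le
    · rw [rename_node, hβ.2.2.1 f rv (fun i => (hrv i).1),
        hβ.2.2.1 f _ (fun i => isFinite_rename (hfin i))]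
      refine alg.mono f _ _ ?_
      intro i
      refine ih i ?_ (rv i) (hrv i).1 (hrv i).2
      intro p a hp
      refine H ((i : ℕ) :: p) a ?_
      rw [node_label_cons _ _ i.isLt]
      simpa using hp

theorem lemN {F' : Type} (hδ : IsDelStructure Q alg β)
    (kB : F' → Coterm σ A) (hkB : ∀ a, kB a ∈ Q.Del A) (gv : F' → A) :
    ∀ s : Coterm σ F', s.IsFinite →
      (∀ p a, s.label p = some (Sum.inr a) →
        IsLUB {x | ∃ r', Coterm.Ll r' (kB a) ∧ x = β r'} (gv a)) →
      IsLUB {x | ∃ r', Coterm.Ll r' (Coterm.subst kB s) ∧ x = β r'}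
        (β (Coterm.rename gv s)) := by
  have hsubdel : ∀ s : Coterm σ F', s.IsFinite → Coterm.subst kB s ∈ Q.Del A := by
    intro s hs
    refine Q.stable F' A (Coterm.subst kB) (isOmegaContMorphism_subst kB) ?_ s
      (finite_mem_del Q F' s hs)
    intro a
    rw [subst_var]
    exact hkB a
  refine Coterm.finite_induction (P := fun s =>
    (∀ p a, s.label p = some (Sum.inr a) →
        IsLUB {x | ∃ r', Coterm.Ll r' (kB a) ∧ x = β r'} (gv a)) →
      IsLUB {x | ∃ r', Coterm.Ll r' (Coterm.subst kB s) ∧ x = β r'}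
        (β (Coterm.rename gv s))) ?_ ?_ ?_
  · intro _
    rw [subst_bot, rename_bot]
    constructor
    · rintro x ⟨r', hll, rfl⟩
      have : r' = ⊥ := le_bot_iff.mp hll.2
      rw [this]
    · intro w hw
      exact hw ⟨⊥, ll_bot, rfl⟩
  · intro a H
    rw [subst_var, rename_var, hδ.1.2.1]
    exact H [] a (var_label_nil a)
  · intro f ss hfin ih H
    have ihs : ∀ i, IsLUB {x | ∃ r', Coterm.Ll r' (Coterm.subst kB (ss i)) ∧ x = β r'}
        (β (Coterm.rename gv (ss i))) := by
      intro i
      refine ih i ?_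
      intro p a hp
      refine H ((i : ℕ) :: p) a ?_
      rw [node_label_cons _ _ i.isLt]
      simpa using hp
    have hdel : ∀ i, Coterm.subst kB (ss i) ∈ Q.Del A :=
      fun i => hsubdel (ss i) (hfin i)
    have hveq : (fun i => β (Coterm.rename gv (ss i))) =
        fun i => β (Coterm.subst kB (ss i)) :=
      funext fun i => (ihs i).unique (hδ.2.1 _ (hdel i))
    rw [subst_node, rename_node,
      hδ.1.2.2.1 f _ (fun i => isFinite_rename (hfin i)), hveq]
    constructor
    · rintro x ⟨r', hll, rfl⟩
      rcases ll_node_cases hll with rfl | ⟨rv, hrv, rfl⟩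
      · rw [hδ.1.1]
        exact bot_le
      · rw [hδ.1.2.2.1 f rv (fun i => (hrv i).1)]
        exact (op_isLUB_all hδ f _ hdel).1 ⟨rv, hrv, rfl⟩
    · intro w hw
      refine (op_isLUB_all hδ f _ hdel).2 ?_
      rintro x ⟨sv, hsv, rfl⟩
      refine hw ⟨Coterm.node f sv, ⟨isFinite_node (fun i => (hsv i).1),
        node_le_node (fun i => (hsv i).2)⟩, ?_⟩
      rw [hδ.1.2.2.1 f sv (fun i => (hsv i).1)]

end MainAux
/-- **Main Theorem.** Let `𝒱_ω` be the variety of ω-continuous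
algebras defined by a set `E` of inequalities between finite partial terms,
`𝒱_r` the variety of Δ-algebras defined by `E`, `F_ω(X)` the free algebra of
`𝒱_ω` on `X` (with insertion of generators `ι`), and
`R(X) = { t^{F_ω(X)} : t ∈ ΔX }` the Δ-subalgebra of `F_ω(X)` generated by
`X`.  Then `R(X)` is the free Δ-algebra in `𝒱_r` on generators `X`: for every
Δ-algebra `B ∈ 𝒱_r` and every `h : X → B`, there is a unique Δ-algebra
morphism `R(X) → B` extending `h`. -/
theorem stmt_16 (σ : Signature) (Q : QuasiRegular σ)
    (E : Set (Coterm σ ℕ × Coterm σ ℕ))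
    (hE : ∀ e ∈ E, (e.1).IsFinite ∧ (e.2).IsFinite)
    (X : Type) (Fω : Type) [PartialOrder Fω] [OrderBot Fω]
    (algω : OrderedAlg σ Fω) (βω : Coterm σ Fω → Fω)
    (hω : IsOmegaContStructure algω βω)
    (hωE : SatisfiesIneqs βω E) (ι : X → Fω)
    (hfree : IsFreeOmegaCont E X βω ι) :
    -- `R(X)`, the set of elements of `F_ω(X)` denoted by the terms in `ΔX`:
    ∀ R : Set Fω, R = {a : Fω | ∃ t ∈ Q.Del X, a = βω (Coterm.rename ι t)} →
    ∀ B : DelAlg σ Q, @SatisfiesIneqs σ B.A B.po B.interp E →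
    ∀ h : X → B.A,
      ∃ g : Fω → B.A,
        -- `g` restricted to `R(X)` is a Δ-algebra morphism extending `h`:
        ((∀ a b : Fω, a ∈ R → b ∈ R → a ≤ b → B.po.le (g a) (g b)) ∧
         g ⊥ = (@OrderBot.toBot B.A B.po.toLE B.ob).bot ∧
         (∀ t : Coterm σ Fω, t ∈ Q.Del Fω →
           (∀ (p : List ℕ) (x : Fω), t.label p = some (Sum.inr x) → x ∈ R) →
           g (βω t) = B.interp (Coterm.rename g t)) ∧
         (∀ x : X, g (ι x) = h x)) ∧
        -- and it is the unique such morphism on `R(X)`: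
        (∀ g' : Fω → B.A,
          ((∀ a b : Fω, a ∈ R → b ∈ R → a ≤ b → B.po.le (g' a) (g' b)) ∧
           g' ⊥ = (@OrderBot.toBot B.A B.po.toLE B.ob).bot ∧
           (∀ t : Coterm σ Fω, t ∈ Q.Del Fω →
             (∀ (p : List ℕ) (x : Fω), t.label p = some (Sum.inr x) → x ∈ R) →
             g' (βω t) = B.interp (Coterm.rename g' t)) ∧
           (∀ x : X, g' (ι x) = h x)) →
          ∀ a ∈ R, g' a = g a) := by
  intro R hR B hBE h
  letI : PartialOrder B.A := B.po
  letI : OrderBot B.A := B.ob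
  classical
  obtain ⟨g₀, ⟨hg₀mono, hg₀bot, hg₀morph, hg₀ext⟩, -⟩ :=
    hfree (OIdl.idlCont B.alg B.interp B.str.1) (OIdl.idl_satisfies B.str.1 hE hBE)
      (fun x => OIdl.prin σ (h x))
  -- the value of `g₀` on `R`
  have hg0val : ∀ u : Coterm σ X, g₀ (βω (Coterm.rename ι u)) =
      OIdl.interp B.str.1 (Coterm.rename (fun x => OIdl.prin σ (h x)) u) := by
    intro u
    rw [hg₀morph (Coterm.rename ι u), Coterm.rename_comp]
    have he : g₀ ∘ ι = fun x => OIdl.prin σ (h x) := funext hg₀ext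
    rw [he]
    rfl
  have hrenameDel : ∀ u ∈ Q.Del X, Coterm.rename h u ∈ Q.Del B.A := by
    intro u hu
    refine Q.stable X B.A (Coterm.rename h) (Coterm.isOmegaContMorphism_rename h) ?_ u hu
    intro x
    rw [Coterm.rename_var]
    exact Q.var_mem B.A (h x)
  have K2 : ∀ u ∈ Q.Del X,
      IsLUB {x | ∃ s, Coterm.Ll s u ∧ x = B.interp (Coterm.rename h s)}
        (B.interp (Coterm.rename h u)) := by
    intro u hu
    have h1 := B.str.2.1 (Coterm.rename h u) (hrenameDel u hu)
    have he : {x | ∃ s', Coterm.Ll s' (Coterm.rename h u) ∧ x = B.interp s'} =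
        {x | ∃ s, Coterm.Ll s u ∧ x = B.interp (Coterm.rename h s)} := by
      ext x
      constructor
      · rintro ⟨s', hll, rfl⟩
        obtain ⟨s, hs, rfl⟩ := Coterm.ll_rename_iff.mp hll
        exact ⟨s, hs, rfl⟩
      · rintro ⟨s, hs, rfl⟩
        exact ⟨Coterm.rename h s, Coterm.ll_rename_iff.mpr ⟨s, hs, rfl⟩, rfl⟩
    rw [he] at h1
    exact h1
  have K1 : ∀ u ∈ Q.Del X,
      IsLUB ((g₀ (βω (Coterm.rename ι u)) : OIdl σ B.A).1)
        (B.interp (Coterm.rename h u)) := by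
    intro u hu
    have h1 : (g₀ (βω (Coterm.rename ι u)) : OIdl σ B.A).1 =
        {x | ∃ y ∈ {y : B.A | ∃ s, Coterm.Ll s u ∧
            y = B.interp (Coterm.rename h s)}, x ≤ y} := by
      rw [hg0val u]
      exact OIdl.interp_rename_prin B.str.1 h u
    rw [h1]
    exact isLUB_down_iff.mpr (K2 u hu)
  -- definition of `g`
  obtain ⟨g, hgspec⟩ : ∃ g : Fω → B.A, ∀ a : Fω,
      (∃ b : B.A, IsLUB ((g₀ a : OIdl σ B.A).1) b) →
      IsLUB ((g₀ a : OIdl σ B.A).1) (g a) := by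
    refine ⟨fun a => if hx : ∃ b : B.A, IsLUB ((g₀ a : OIdl σ B.A).1) b then
      hx.choose else ⊥, ?_⟩
    intro a hx
    simp only [dif_pos hx]
    exact hx.choose_spec
  have hgval : ∀ u ∈ Q.Del X,
      g (βω (Coterm.rename ι u)) = B.interp (Coterm.rename h u) := by
    intro u hu
    exact (hgspec _ ⟨_, K1 u hu⟩).unique (K1 u hu)
  refine ⟨g, ⟨?_, ?_, ?_, ?_⟩, ?_⟩
  · -- monotone on R
    intro a b ha hb hab
    rw [hR] at ha hb
    obtain ⟨ta, hta, rfl⟩ := ha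
    obtain ⟨tb, htb, rfl⟩ := hb
    have hla := hgspec _ ⟨_, K1 ta hta⟩
    have hlb := hgspec _ ⟨_, K1 tb htb⟩
    have hsub : (g₀ (βω (Coterm.rename ι ta)) : OIdl σ B.A).1 ⊆
        (g₀ (βω (Coterm.rename ι tb)) : OIdl σ B.A).1 :=
      hg₀mono _ _ hab
    exact hla.2 (fun x hx => hlb.1 (hsub hx))
  · -- strictness
    have hbe : (⊥ : Fω) = βω (Coterm.rename ι (⊥ : Coterm σ X)) := by
      rw [Coterm.rename_bot, hω.1]
    rw [hbe, hgval ⊥ (Q.bot_mem X), Coterm.rename_bot]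
    exact B.str.1.1
  · -- morphism property on Δ-terms with variables in R
    intro t htDel hvars
    have hk : ∀ a : Fω, ∃ u, u ∈ Q.Del X ∧ (a ∈ R → a = βω (Coterm.rename ι u)) := by
      intro a
      by_cases ha : a ∈ R
      · rw [hR] at ha
        obtain ⟨u, hu, he⟩ := ha
        exact ⟨u, hu, fun _ => he⟩
      · exact ⟨⊥, Q.bot_mem X, fun h' => absurd h' ha⟩
    choose k hk1 hk2 using hk
    have hkBDel : ∀ a, Coterm.rename h (k a) ∈ Q.Del B.A :=
      fun a => hrenameDel (k a) (hk1 a)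
    have ht' : Coterm.subst k t ∈ Q.Del X := by
      refine Q.stable Fω X (Coterm.subst k) (Coterm.isOmegaContMorphism_subst k) ?_ t htDel
      intro a
      rw [Coterm.subst_var]
      exact hk1 a
    have hβt : βω t = βω (Coterm.rename ι (Coterm.subst k t)) := by
      rw [Coterm.rename_subst]
      have h2 := omega_subst_congr hω (k₁ := fun a => Coterm.rename ι (k a))
        (k₂ := fun a => Coterm.var a) t ?_
      · rw [Coterm.subst_var_fun] at h2
        exact h2.symm
      · intro p a hp
        rw [hω.2.1]
        exact (hk2 a (hvars p a hp)).symm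
    have hgt : g (βω t) = B.interp (Coterm.rename h (Coterm.subst k t)) := by
      rw [hβt]
      exact hgval _ ht'
    have hsubkB : Coterm.rename h (Coterm.subst k t) =
        Coterm.subst (fun a => Coterm.rename h (k a)) t :=
      Coterm.rename_subst h k t
    have hsubtDel : Coterm.subst (fun a => Coterm.rename h (k a)) t ∈ Q.Del B.A := by
      refine Q.stable Fω B.A _ (Coterm.isOmegaContMorphism_subst _) ?_ t htDel
      intro a
      rw [Coterm.subst_var]
      exact hkBDel a
    have hgtDel : Coterm.rename g t ∈ Q.Del B.A := by
      refine Q.stable Fω B.A (Coterm.rename g) (Coterm.isOmegaContMorphism_rename g) ?_ t htDel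
      intro a
      rw [Coterm.rename_var]
      exact Q.var_mem B.A (g a)
    have LHSl := B.str.2.1 _ hsubtDel
    have RHSl := B.str.2.1 _ hgtDel
    have varIsLUB : ∀ p a, t.label p = some (Sum.inr a) →
        IsLUB {x | ∃ r', Coterm.Ll r' (Coterm.rename h (k a)) ∧ x = B.interp r'}
          (g a) := by
      intro p a hp
      have ha := hvars p a hp
      have h1 := B.str.2.1 _ (hkBDel a)
      have h2 : g a = B.interp (Coterm.rename h (k a)) := by
        conv_lhs => rw [hk2 a ha]
        exact hgval (k a) (hk1 a)
      rw [h2]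
      exact h1
    have goal2 : B.interp (Coterm.subst (fun a => Coterm.rename h (k a)) t) =
        B.interp (Coterm.rename g t) := by
      apply le_antisymm
      · refine LHSl.2 ?_
        rintro x ⟨r', hll, rfl⟩
        obtain ⟨s, hst, hle⟩ := Coterm.ll_subst hll
        have h1 : B.interp r' ≤ B.interp (Coterm.rename g s) := by
          refine lemM B.str.1 (fun a => Coterm.rename h (k a)) g s hst.1 ?_ r' hll.1 hle
          intro p a hp
          exact varIsLUB p a (hst.2 _ _ hp)
        refine h1.trans (RHSl.1 ?_)
        exact ⟨Coterm.rename g s, ⟨Coterm.isFinite_rename hst.1,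
          Coterm.rename_mono g hst.2⟩, rfl⟩
      · refine RHSl.2 ?_
        rintro x ⟨r', hll, rfl⟩
        obtain ⟨s, hs, rfl⟩ := Coterm.ll_rename_iff.mp hll
        have h1 := lemN B.str (fun a => Coterm.rename h (k a)) hkBDel g s hs.1
          (fun p a hp => varIsLUB p a (hs.2 _ _ hp))
        refine h1.2 ?_
        rintro y ⟨r'', hll'', rfl⟩
        refine LHSl.1 ?_
        exact ⟨r'', ⟨hll''.1, hll''.2.trans (Coterm.subst_mono _ hs.2)⟩, rfl⟩
    rw [hgt, hsubkB]
    exact goal2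
  · -- extension of h
    intro x
    have hxe : ι x = βω (Coterm.rename ι (Coterm.var x)) := by
      rw [Coterm.rename_var, hω.2.1]
    rw [hxe, hgval _ (Q.var_mem X x), Coterm.rename_var]
    exact B.str.1.2.1 (h x)
  · -- uniqueness on R
    rintro g' ⟨hm', hb', hmorph', hext'⟩ a ha
    rw [hR] at ha
    obtain ⟨u, hu, rfl⟩ := ha
    have hTDel : Coterm.rename ι u ∈ Q.Del Fω := by
      refine Q.stable X Fω (Coterm.rename ι) (Coterm.isOmegaContMorphism_rename ι) ?_ u hu
      intro x
      rw [Coterm.rename_var]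
      exact Q.var_mem Fω (ι x)
    have hTvars : ∀ p x₀, (Coterm.rename ι u).label p = some (Sum.inr x₀) → x₀ ∈ R := by
      intro p x₀ hp
      rw [Coterm.rename_label_inr_iff] at hp
      obtain ⟨x, hx, rfl⟩ := hp
      rw [hR]
      exact ⟨Coterm.var x, Q.var_mem X x, by rw [Coterm.rename_var, hω.2.1]⟩
    have h1 := hmorph' (Coterm.rename ι u) hTDel hTvars
    rw [Coterm.rename_comp] at h1
    have h2 : Coterm.rename (g' ∘ ι) u = Coterm.rename h u :=
      Coterm.rename_congr (fun p x _ => hext' x)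
    rw [h2] at h1
    rw [h1]
    exact (hgval u hu).symm
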